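/- arXiv:2009.08004 — 4 statements merged into one kernel-verified Lean document; each statement's English description precedes it below -/
import Mathlib

section
/- Let m ≥ 1 and let A be an m×m complex matrix with eigenvalues λ₁,…,λ_m (counted with multiplicity). There exists a constant C > 0, depending only on m and A, such that for every m×m complex matrix B with ‖B − A‖ ≤ 1, if μ₁,…,μ_m are the eigenvalues of B (counted with multiplicity), then there exists a permutation π of {1,…,m} with √(∑_{j=1}^m |μ_{π(j)} − λ_j|²) ≤ C·‖B − A‖^{1/m}. -/
open scoped Matrix.Norms.L2Operator

noncomputable section

/-- The multiset of eigenvalues (roots of the characteristic polynomial, with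
multiplicity) of `A` is `{λ_j : 1 ≤ j ≤ m}`. -/
def EigListing {m : ℕ} (A : Matrix (Fin m) (Fin m) ℂ) (lam : Fin m → ℂ) : Prop :=
  A.charpoly.roots = Multiset.map lam Finset.univ.val

namespace EigAux

open Polynomial Matrix Finset Filter Topology

variable {m : ℕ}

/-- product difference bound -/
lemma norm_prod_sub_prod_le {ι : Type*} (s : Finset ι) (x y : ι → ℂ) {E e : ℝ}
    (hE : 1 ≤ E) (he : 0 ≤ e)
    (hx : ∀ i ∈ s, ‖x i‖ ≤ E) (hy : ∀ i ∈ s, ‖y i‖ ≤ E)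
    (hd : ∀ i ∈ s, ‖x i - y i‖ ≤ e) :
    ‖∏ i ∈ s, x i - ∏ i ∈ s, y i‖ ≤ (s.card : ℝ) * E ^ s.card * e := by
  classical
  induction s using Finset.induction_on with
  | empty => simp
  | @insert a s ha ih =>
    have hxa : ‖x a‖ ≤ E := hx a (mem_insert_self a s)
    have hprod : ∀ (z : ι → ℂ), (∀ i ∈ s, ‖z i‖ ≤ E) → ‖∏ i ∈ s, z i‖ ≤ E ^ s.card := by
      intro z hz
      calc ‖∏ i ∈ s, z i‖ = ∏ i ∈ s, ‖z i‖ := by rw [norm_prod]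
        _ ≤ ∏ _i ∈ s, E := Finset.prod_le_prod (fun i _ => norm_nonneg _) hz
        _ = E ^ s.card := by rw [Finset.prod_const]
    have key : ∏ i ∈ insert a s, x i - ∏ i ∈ insert a s, y i
        = x a * (∏ i ∈ s, x i - ∏ i ∈ s, y i) + (x a - y a) * ∏ i ∈ s, y i := by
      rw [Finset.prod_insert ha, Finset.prod_insert ha]; ring
    rw [key]
    have h1 : ‖x a * (∏ i ∈ s, x i - ∏ i ∈ s, y i)‖
        ≤ E * ((s.card : ℝ) * E ^ s.card * e) := by
      rw [norm_mul]
      exact mul_le_mul hxa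
        (ih (fun i hi => hx i (mem_insert_of_mem hi)) (fun i hi => hy i (mem_insert_of_mem hi))
          (fun i hi => hd i (mem_insert_of_mem hi)))
        (norm_nonneg _) (le_trans zero_le_one hE)
    have h2 : ‖(x a - y a) * ∏ i ∈ s, y i‖ ≤ e * E ^ s.card := by
      rw [norm_mul]
      exact mul_le_mul (hd a (mem_insert_self a s))
        (hprod y (fun i hi => hy i (mem_insert_of_mem hi))) (norm_nonneg _) he
    calc ‖_ + _‖ ≤ ‖x a * (∏ i ∈ s, x i - ∏ i ∈ s, y i)‖ + ‖(x a - y a) * ∏ i ∈ s, y i‖ :=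
          norm_add_le _ _
      _ ≤ E * ((s.card : ℝ) * E ^ s.card * e) + e * E ^ s.card := add_le_add h1 h2
      _ ≤ ((insert a s).card : ℝ) * E ^ (insert a s).card * e := by
          rw [Finset.card_insert_of_notMem ha]
          push_cast
          have hE0 : (0:ℝ) ≤ E := le_trans zero_le_one hE
          have hpow : E ^ s.card ≤ E ^ (s.card + 1) :=
            pow_le_pow_right₀ hE (Nat.le_succ _)
          have h3 : e * E ^ s.card ≤ e * E ^ (s.card + 1) :=
            mul_le_mul_of_nonneg_left hpow he
          have h4 : E * ((s.card : ℝ) * E ^ s.card * e) = (s.card : ℝ) * E ^ (s.card + 1) * e := by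
            ring
          nlinarith [h3, h4]


variable {m : ℕ}

/-- determinant difference bound -/
lemma norm_det_sub_det_le (M N : Matrix (Fin m) (Fin m) ℂ) {E e : ℝ}
    (hE : 1 ≤ E) (he : 0 ≤ e)
    (hM : ∀ i j, ‖M i j‖ ≤ E) (hN : ∀ i j, ‖N i j‖ ≤ E)
    (hd : ∀ i j, ‖M i j - N i j‖ ≤ e) :
    ‖M.det - N.det‖ ≤ (m.factorial : ℝ) * ((m : ℝ) * E ^ m * e) := by
  classical
  rw [Matrix.det_apply, Matrix.det_apply, ← Finset.sum_sub_distrib]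
  refine le_trans (norm_sum_le _ _) ?_
  have hterm : ∀ σ : Equiv.Perm (Fin m),
      ‖Equiv.Perm.sign σ • ∏ i, M (σ i) i - Equiv.Perm.sign σ • ∏ i, N (σ i) i‖
        ≤ (m : ℝ) * E ^ m * e := by
    intro σ
    have : Equiv.Perm.sign σ • ∏ i, M (σ i) i - Equiv.Perm.sign σ • ∏ i, N (σ i) i
        = Equiv.Perm.sign σ • (∏ i, M (σ i) i - ∏ i, N (σ i) i) := by
      rw [smul_sub]
    rw [this]
    have hs : ‖Equiv.Perm.sign σ • (∏ i, M (σ i) i - ∏ i, N (σ i) i)‖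
        = ‖∏ i, M (σ i) i - ∏ i, N (σ i) i‖ := by
      rcases Int.units_eq_one_or (Equiv.Perm.sign σ) with h | h <;> rw [h] <;>
        simp [norm_sub_rev]
    rw [hs]
    have := norm_prod_sub_prod_le (Finset.univ : Finset (Fin m))
      (fun i => M (σ i) i) (fun i => N (σ i) i) hE he
      (fun i _ => hM _ _) (fun i _ => hN _ _) (fun i _ => hd _ _)
    simpa using this
  refine le_trans (Finset.sum_le_card_nsmul _ _ _ (fun σ _ => hterm σ)) ?_
  rw [nsmul_eq_mul]
  apply le_of_eq
  congr 1
  rw [Finset.card_univ, Fintype.card_perm, Fintype.card_fin]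

/-- evaluation of the characteristic polynomial -/
lemma eval_charpoly (M : Matrix (Fin m) (Fin m) ℂ) (z : ℂ) :
    M.charpoly.eval z = (Matrix.scalar (Fin m) z - M).det := by
  rw [Matrix.charpoly, eval_det, matPolyEquiv_charmatrix]
  simp

/-- entries are bounded by the L2 operator norm -/
lemma entry_norm_le (M : Matrix (Fin m) (Fin m) ℂ) (i j : Fin m) : ‖M i j‖ ≤ ‖M‖ := by
  have hv : ‖(EuclideanSpace.single j (1:ℂ) : EuclideanSpace ℂ (Fin m))‖ = 1 := by
    simp [EuclideanSpace.norm_single]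
  have hmv := Matrix.l2_opNorm_mulVec M (EuclideanSpace.single j (1:ℂ))
  rw [hv, mul_one] at hmv
  refine le_trans ?_ hmv
  have hle : ∀ (w : EuclideanSpace ℂ (Fin m)) (i : Fin m), ‖w i‖ ≤ ‖w‖ := by
    intro w i
    rw [EuclideanSpace.norm_eq]
    have h1 : ‖w i‖ ^ 2 ≤ ∑ k, ‖w k‖ ^ 2 :=
      Finset.single_le_sum (f := fun k => ‖w k‖ ^ 2) (fun k _ => sq_nonneg _)
        (Finset.mem_univ i)
    calc ‖w i‖ = Real.sqrt (‖w i‖ ^ 2) := (Real.sqrt_sq (norm_nonneg _)).symm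
      _ ≤ Real.sqrt (∑ k, ‖w k‖ ^ 2) := Real.sqrt_le_sqrt h1
  have hwi : ((EuclideanSpace.equiv (Fin m) ℂ).symm (M.mulVec (EuclideanSpace.single j (1:ℂ)))) i
      = M i j := by
    show (M.mulVec (EuclideanSpace.single j (1:ℂ)).ofLp) i = M i j
    simp [Matrix.mulVec, dotProduct, EuclideanSpace.single_apply]
  calc ‖M i j‖ = ‖((EuclideanSpace.equiv (Fin m) ℂ).symm (M.mulVec (EuclideanSpace.single j (1:ℂ)))) i‖ := by
        rw [hwi]
    _ ≤ _ := hle _ i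

/-- roots of the characteristic polynomial are bounded by the operator norm -/
lemma root_norm_le {M : Matrix (Fin m) (Fin m) ℂ} {z : ℂ}
    (hz : M.charpoly.eval z = 0) : ‖z‖ ≤ ‖M‖ := by
  rw [eval_charpoly] at hz
  obtain ⟨v, hv0, hv⟩ := (Matrix.exists_mulVec_eq_zero_iff).2 hz
  have hBv : M.mulVec v = z • v := by
    have h1 : (Matrix.scalar (Fin m) z - M).mulVec v
        = z • v - M.mulVec v := by
      rw [Matrix.sub_mulVec]
      congr 1
      ext i
      simp [Matrix.scalar, Matrix.mulVec_diagonal]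
    rw [h1] at hv
    exact (sub_eq_zero.mp hv).symm
  let v' : EuclideanSpace ℂ (Fin m) := WithLp.toLp 2 v
  have hv' : (0:ℝ) < ‖v'‖ := by
    rw [norm_pos_iff]
    intro h; apply hv0; simpa [v'] using congrArg WithLp.ofLp h
  have h2 := Matrix.l2_opNorm_mulVec M v'
  have h3 : (EuclideanSpace.equiv (Fin m) ℂ).symm (M.mulVec v'.ofLp) = z • v' := by
    show WithLp.toLp 2 (M *ᵥ v) = z • WithLp.toLp 2 v
    rw [hBv]; rfl
  rw [h3, norm_smul] at h2
  have h4 := le_of_mul_le_mul_right h2 hv'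
  simpa using h4


/-- a local linear order on ℂ -/
def cOrder : LinearOrder ℂ :=
  LinearOrder.lift' (fun z => toLex (z.re, z.im)) (fun a b hab => by
    have h1 := congrArg (fun p => (ofLex p).1) hab
    have h2 := congrArg (fun p => (ofLex p).2) hab
    exact Complex.ext h1 h2)

/-- two listings of the same multiset differ by a permutation -/
lemma exists_perm_listing {n : ℕ} {α : Type*} [LinearOrder α] {f g : Fin n → α}
    (h : Multiset.map f Finset.univ.val = Multiset.map g Finset.univ.val) :
    ∃ σ : Equiv.Perm (Fin n), ∀ i, f (σ i) = g i := by
  have hp : (List.ofFn f).Perm (List.ofFn g) := by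
    rw [Fin.univ_val_map, Fin.univ_val_map] at h
    exact Multiset.coe_eq_coe.mp h
  have h1 : Monotone (f ∘ Tuple.sort f) := Tuple.monotone_sort f
  have h2 : Monotone (g ∘ Tuple.sort g) := Tuple.monotone_sort g
  have heq : List.ofFn (f ∘ Tuple.sort f) = List.ofFn (g ∘ Tuple.sort g) :=
    List.Perm.eq_of_sortedLE h1.sortedLE_ofFn h2.sortedLE_ofFn
      (((Tuple.sort f).ofFn_comp_perm f).trans
        (hp.trans ((Tuple.sort g).ofFn_comp_perm g).symm))
  have hfun : f ∘ Tuple.sort f = g ∘ Tuple.sort g := List.ofFn_injective heq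
  refine ⟨(Tuple.sort g).symm.trans (Tuple.sort f), fun i => ?_⟩
  have := congrFun hfun ((Tuple.sort g).symm i)
  simpa using this

/-- factorization of a charpoly given a listing of its roots -/
lemma eval_eq_prod {B : Matrix (Fin m) (Fin m) ℂ} {μ : Fin m → ℂ}
    (hμ : B.charpoly.roots = Multiset.map μ Finset.univ.val) (z : ℂ) :
    B.charpoly.eval z = ∏ j, (z - μ j) := by
  have hmonic : B.charpoly.Monic := Matrix.charpoly_monic B
  have hcard : B.charpoly.roots.card = B.charpoly.natDegree := by
    rw [hμ, Multiset.card_map]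
    simp [Matrix.charpoly_natDegree_eq_dim]
  have hfact := Polynomial.prod_multiset_X_sub_C_of_monic_of_roots_card_eq hmonic hcard
  conv_lhs => rw [← hfact]
  rw [hμ, Multiset.map_map]
  rw [Polynomial.eval_multiset_prod]
  rw [Multiset.map_map]
  rw [Finset.prod_eq_multiset_prod]
  congr 1
  apply Multiset.map_congr rfl
  intro x _
  simp

/-- membership gives roots -/
lemma listing_root {B : Matrix (Fin m) (Fin m) ℂ} {μ : Fin m → ℂ}
    (hμ : B.charpoly.roots = Multiset.map μ Finset.univ.val) (i : Fin m) :
    B.charpoly.eval (μ i) = 0 := by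
  have : μ i ∈ B.charpoly.roots := by
    rw [hμ]
    exact Multiset.mem_map.2 ⟨i, Finset.mem_univ i, rfl⟩
  exact (Polynomial.isRoot_of_mem_roots this)


/-- quantitative bound on charpoly difference -/
lemma charpoly_eval_diff_le (A B : Matrix (Fin m) (Fin m) ℂ) {R : ℝ}
    (hR : ‖A‖ + 1 ≤ R) (hBA : ‖B - A‖ ≤ 1) {z : ℂ} (hz : ‖z‖ ≤ R) :
    ‖A.charpoly.eval z - B.charpoly.eval z‖
      ≤ ((m.factorial : ℝ) * ((m : ℝ) * (2*R+1) ^ m)) * ‖B - A‖ := by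
  have hA : (0:ℝ) ≤ ‖A‖ := norm_nonneg _
  have hR1 : (1:ℝ) ≤ R := by linarith
  have hBn : ‖B‖ ≤ R := by
    have : ‖B‖ ≤ ‖B - A‖ + ‖A‖ := by
      calc ‖B‖ = ‖(B - A) + A‖ := by rw [sub_add_cancel]
        _ ≤ ‖B - A‖ + ‖A‖ := norm_add_le _ _
    linarith
  rw [eval_charpoly, eval_charpoly]
  have hE : (1:ℝ) ≤ 2*R+1 := by linarith
  have he : (0:ℝ) ≤ ‖B - A‖ := norm_nonneg _
  have hent : ∀ (M : Matrix (Fin m) (Fin m) ℂ), ‖M‖ ≤ R → ∀ i j,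
      ‖(Matrix.scalar (Fin m) z - M) i j‖ ≤ 2*R+1 := by
    intro M hM i j
    have h1 : ‖(Matrix.scalar (Fin m) z) i j‖ ≤ R := by
      by_cases h : i = j
      · subst h
        calc ‖(Matrix.scalar (Fin m) z) i i‖ = ‖z‖ := by
              simp [Matrix.scalar, Matrix.diagonal_apply_eq]
          _ ≤ R := hz
      · simp [Matrix.scalar, Matrix.diagonal_apply_ne _ h]
        linarith
    have h2 : ‖M i j‖ ≤ R := le_trans (entry_norm_le M i j) hM
    calc ‖(Matrix.scalar (Fin m) z - M) i j‖ = ‖(Matrix.scalar (Fin m) z) i j - M i j‖ := rfl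
      _ ≤ ‖(Matrix.scalar (Fin m) z) i j‖ + ‖M i j‖ := norm_sub_le _ _
      _ ≤ 2*R+1 := by linarith
  have hd : ∀ i j, ‖(Matrix.scalar (Fin m) z - A) i j - (Matrix.scalar (Fin m) z - B) i j‖
      ≤ ‖B - A‖ := by
    intro i j
    have : (Matrix.scalar (Fin m) z - A) i j - (Matrix.scalar (Fin m) z - B) i j
        = (B - A) i j := by
      simp [Matrix.sub_apply]
    rw [this]
    exact entry_norm_le (B - A) i j
  have := norm_det_sub_det_le (Matrix.scalar (Fin m) z - A) (Matrix.scalar (Fin m) z - B)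
    hE he (hent A (by linarith)) (hent B hBn) hd
  calc ‖(Matrix.scalar (Fin m) z - A).det - (Matrix.scalar (Fin m) z - B).det‖
      ≤ (m.factorial : ℝ) * ((m : ℝ) * (2*R+1) ^ m * ‖B - A‖) := this
    _ = ((m.factorial : ℝ) * ((m : ℝ) * (2*R+1) ^ m)) * ‖B - A‖ := by ring

/-- from a product bound to a min-root bound -/
lemma exists_root_close_of_eval_small (hm : 1 ≤ m) {lam : Fin m → ℂ}
    {A : Matrix (Fin m) (Fin m) ℂ}
    (hlam : A.charpoly.roots = Multiset.map lam Finset.univ.val)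
    {z : ℂ} {t : ℝ} (ht : 0 ≤ t)
    (hev : ‖A.charpoly.eval z‖ ≤ t) :
    ∃ j, ‖z - lam j‖ ≤ t ^ ((1:ℝ)/m) := by
  have hne : (Finset.univ : Finset (Fin m)).Nonempty :=
    Finset.univ_nonempty_iff.mpr (Fin.pos_iff_nonempty.mp hm)
  obtain ⟨j, _, hj⟩ := Finset.exists_min_image Finset.univ
    (fun j => ‖z - lam j‖) hne
  refine ⟨j, ?_⟩
  have hmin : ‖z - lam j‖ ^ m ≤ t := by
    calc ‖z - lam j‖ ^ m = ∏ _k : Fin m, ‖z - lam j‖ := by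
          rw [Finset.prod_const, Finset.card_univ, Fintype.card_fin]
      _ ≤ ∏ k, ‖z - lam k‖ :=
          Finset.prod_le_prod (fun k _ => norm_nonneg _)
            (fun k _ => hj k (Finset.mem_univ k))
      _ = ‖A.charpoly.eval z‖ := by
          rw [eval_eq_prod hlam z]
          rw [norm_prod]
      _ ≤ t := hev
  have h0 : (0:ℝ) ≤ ‖z - lam j‖ := norm_nonneg _
  have hm0 : (m:ℝ) ≠ 0 := by positivity
  calc ‖z - lam j‖
      = (‖z - lam j‖ ^ m) ^ ((1:ℝ)/m) := by
        rw [← Real.rpow_natCast (‖z - lam j‖) m, ← Real.rpow_mul h0]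
        rw [mul_one_div_cancel hm0, Real.rpow_one]
    _ ≤ t ^ ((1:ℝ)/m) :=
        Real.rpow_le_rpow (by positivity) hmin (by positivity)


open Filter Topology

/-- qualitative continuity of eigenvalue listings -/
lemma qual (hm : 1 ≤ m) (A : Matrix (Fin m) (Fin m) ℂ) (lam : Fin m → ℂ)
    (hlam : A.charpoly.roots = Multiset.map lam Finset.univ.val) {ε : ℝ} (hε : 0 < ε) :
    ∃ δ > (0:ℝ), ∀ B : Matrix (Fin m) (Fin m) ℂ, ‖B - A‖ ≤ δ →
      ∀ μ : Fin m → ℂ, B.charpoly.roots = Multiset.map μ Finset.univ.val →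
        ∃ π : Equiv.Perm (Fin m), ∀ j, ‖μ (π j) - lam j‖ ≤ ε := by
  by_contra hcon
  push_neg at hcon
  have h' : ∀ n : ℕ, ∃ B : Matrix (Fin m) (Fin m) ℂ, ‖B - A‖ ≤ 1/((n:ℝ)+1) ∧
      ∃ μ : Fin m → ℂ, (B.charpoly.roots = Multiset.map μ Finset.univ.val ∧
        ∀ π : Equiv.Perm (Fin m), ∃ j, ε < ‖μ (π j) - lam j‖) := by
    intro n
    obtain ⟨B, hB1, μ, hμ1, hbad⟩ := hcon (1/((n:ℝ)+1)) (by positivity)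
    exact ⟨B, hB1, μ, hμ1, hbad⟩
  choose B hB μ hμs using h'
  have hμ : ∀ n, (B n).charpoly.roots = Multiset.map (μ n) Finset.univ.val :=
    fun n => (hμs n).1
  have hbad : ∀ n (π : Equiv.Perm (Fin m)), ∃ j, ε < ‖(μ n) (π j) - lam j‖ :=
    fun n => (hμs n).2
  have hB1 : ∀ n, ‖B n - A‖ ≤ 1 := by
    intro n
    refine le_trans (hB n) ?_
    rw [div_le_one (by positivity)]
    have : (0:ℝ) ≤ (n:ℝ) := Nat.cast_nonneg n
    linarith
  have hBnorm : ∀ n, ‖B n‖ ≤ ‖A‖ + 1 := by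
    intro n
    calc ‖B n‖ = ‖(B n - A) + A‖ := by rw [sub_add_cancel]
      _ ≤ ‖B n - A‖ + ‖A‖ := norm_add_le _ _
      _ ≤ ‖A‖ + 1 := by linarith [hB1 n]
  have hmem : ∀ n, μ n ∈ Metric.closedBall (0 : Fin m → ℂ) (‖A‖ + 1) := by
    intro n
    rw [Metric.mem_closedBall, dist_zero_right]
    rw [pi_norm_le_iff_of_nonneg (by positivity)]
    intro i
    have h1 : ‖μ n i‖ ≤ ‖B n‖ := root_norm_le (listing_root (hμ n) i)
    calc ‖μ n i‖ = ‖μ n i‖ := rfl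
      _ ≤ ‖B n‖ := h1
      _ ≤ ‖A‖ + 1 := hBnorm n
  obtain ⟨ν, -, φ, hφmono, hφ⟩ :=
    (isCompact_closedBall (0 : Fin m → ℂ) (‖A‖ + 1)).tendsto_subseq hmem
  -- pointwise limit of products
  have heq : ∀ z : ℂ, ∏ j, (z - ν j) = ∏ j, (z - lam j) := by
    intro z
    have h1 : Tendsto (fun n => ∏ j, (z - μ (φ n) j)) atTop (𝓝 (∏ j, (z - ν j))) := by
      refine tendsto_finset_prod _ (fun j _ => ?_)
      exact tendsto_const_nhds.sub (((continuous_apply j).tendsto ν).comp hφ)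
    have h2 : Tendsto (fun n => ∏ j, (z - μ (φ n) j)) atTop (𝓝 (∏ j, (z - lam j))) := by
      set R : ℝ := max (‖z‖) (‖A‖ + 1) with hR
      set K : ℝ := (m.factorial : ℝ) * ((m : ℝ) * (2*R+1) ^ m) with hK
      have hK0 : 0 ≤ K := by positivity
      have hdiff : ∀ n, ‖(∏ j, (z - μ (φ n) j)) - ∏ j, (z - lam j)‖ ≤ K * (1/((n:ℝ)+1)) := by
        intro n
        have he1 : ∏ j, (z - μ (φ n) j) = (B (φ n)).charpoly.eval z :=
          (eval_eq_prod (hμ (φ n)) z).symm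
        have he2 : ∏ j, (z - lam j) = A.charpoly.eval z := (eval_eq_prod hlam z).symm
        rw [he1, he2, norm_sub_rev]
        have := charpoly_eval_diff_le (m := m) A (B (φ n)) (R := R)
          (by rw [hR]; exact le_max_right _ _) (hB1 (φ n)) (z := z)
          (by rw [hR]; exact le_max_left _ _)
        refine le_trans this ?_
        have hφn : ‖B (φ n) - A‖ ≤ 1/((n:ℝ)+1) := by
          refine le_trans (hB (φ n)) ?_
          have h3 : (n:ℝ) + 1 ≤ (φ n : ℝ) + 1 := by
            have h4 : n ≤ φ n := hφmono.le_apply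
            have h5 : (n:ℝ) ≤ (φ n : ℝ) := Nat.cast_le.mpr h4
            linarith
          exact one_div_le_one_div_of_le (by positivity) h3
        exact mul_le_mul_of_nonneg_left hφn hK0
      rw [tendsto_iff_norm_sub_tendsto_zero]
      refine squeeze_zero (fun n => norm_nonneg _) hdiff ?_
      have := tendsto_one_div_add_atTop_nhds_zero_nat (𝕜 := ℝ)
      simpa using this.const_mul K
    exact tendsto_nhds_unique h1 h2
  -- polynomial equality and root multiset equality
  have hroots : Multiset.map ν Finset.univ.val = Multiset.map lam Finset.univ.val := by
    have hP : (∏ j, (Polynomial.X - Polynomial.C (ν j)))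
        = ∏ j, (Polynomial.X - Polynomial.C (lam j)) := by
      apply Polynomial.funext
      intro z
      rw [Polynomial.eval_prod, Polynomial.eval_prod]
      simpa using heq z
    have hr : ∀ f : Fin m → ℂ,
        (∏ j, (Polynomial.X - Polynomial.C (f j))).roots
          = Multiset.map f Finset.univ.val := by
      intro f
      rw [Finset.prod_eq_multiset_prod]
      have : Multiset.map (fun j => Polynomial.X - Polynomial.C (f j)) Finset.univ.val
          = Multiset.map (fun a => Polynomial.X - Polynomial.C a)
              (Multiset.map f Finset.univ.val) := by
        rw [Multiset.map_map]
        rfl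
      rw [this, Polynomial.roots_multiset_prod_X_sub_C]
    rw [← hr ν, ← hr lam, hP]
  letI : LinearOrder ℂ := cOrder
  obtain ⟨σ, hσ⟩ := exists_perm_listing hroots
  -- pick a far enough index
  obtain ⟨N, hN⟩ := (Metric.tendsto_atTop.mp hφ) ε hε
  have hclose : ∀ j, ‖μ (φ N) j - ν j‖ < ε := by
    intro j
    have h1 : dist (μ (φ N) j) (ν j) ≤ dist (μ (φ N)) ν := dist_le_pi_dist _ _ j
    have h2 : dist (μ (φ N)) ν < ε := hN N le_rfl
    calc ‖μ (φ N) j - ν j‖ = dist (μ (φ N) j) (ν j) := by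
          rw [Complex.dist_eq]
      _ ≤ dist (μ (φ N)) ν := h1
      _ < ε := h2
  obtain ⟨j, hj⟩ := hbad (φ N) σ
  have : ‖μ (φ N) (σ j) - lam j‖ < ε := by
    rw [← hσ j]
    exact hclose (σ j)
  exact absurd hj (not_lt.mpr (le_of_lt this))

end EigAux

set_option maxHeartbeats 1000000 in
/-- **Eigenvalue perturbation (Proposition 2.3 of Ge–You–Zhao)**: for an `m×m` complex
matrix `A` with eigenvalues `λ₁,…,λ_m`, there is `C > 0` depending only on `m` and `A`
such that for every `B` with `‖B − A‖ ≤ 1` and eigenvalues `μ₁,…,μ_m`, some permutation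
`π` satisfies `√(∑ |μ_{π(j)} − λ_j|²) ≤ C‖B − A‖^{1/m}`.  Here `‖·‖` is the operator
norm on matrices acting on `ℂ^m` with the Euclidean norm. -/
theorem eigenvalue_perturbation
    (m : ℕ) (hm : 1 ≤ m) (A : Matrix (Fin m) (Fin m) ℂ)
    (lam : Fin m → ℂ) (hlam : EigListing A lam) :
    ∃ C : ℝ, 0 < C ∧
      ∀ B : Matrix (Fin m) (Fin m) ℂ, ‖B - A‖ ≤ 1 →
        ∀ μ : Fin m → ℂ, EigListing B μ →
          ∃ π : Equiv.Perm (Fin m),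
            Real.sqrt (∑ j, ‖μ (π j) - lam j‖ ^ 2) ≤
              C * ‖B - A‖ ^ ((1 : ℝ) / m) := by
  classical
  have hlam' : A.charpoly.roots = Multiset.map lam Finset.univ.val := hlam
  have hm0 : (0:ℝ) < (m:ℝ) := by exact_mod_cast Nat.lt_of_lt_of_le Nat.zero_lt_one hm
  set R : ℝ := ‖A‖ + 1 with hRdef
  have hR0 : (0:ℝ) < R := by have := norm_nonneg A; rw [hRdef]; linarith
  set K : ℝ := (m.factorial : ℝ) * ((m:ℝ) * (2*R+1) ^ m) with hKdef
  have hK0 : (0:ℝ) < K := by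
    have h1 : (0:ℝ) < (m.factorial : ℝ) := by exact_mod_cast m.factorial_pos
    have h2 : (0:ℝ) < 2*R+1 := by linarith
    positivity
  -- the minimal gap between distinct eigenvalues of A
  set gaps : Finset ℝ :=
    ((Finset.univ ×ˢ Finset.univ).filter
      fun jk : Fin m × Fin m => lam jk.1 ≠ lam jk.2).image
      (fun jk => ‖lam jk.1 - lam jk.2‖) with hgapsdef
  set g : ℝ := if h : gaps.Nonempty then gaps.min' h else 1 with hgdef
  have hg0 : 0 < g := by
    rw [hgdef]
    split_ifs with h
    · have hmem := gaps.min'_mem h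
      obtain ⟨jk, hjk, hval⟩ := Finset.mem_image.mp hmem
      rw [Finset.mem_filter] at hjk
      have hpos : 0 < ‖lam jk.1 - lam jk.2‖ :=
        norm_pos_iff.mpr (sub_ne_zero.mpr hjk.2)
      rwa [hval] at hpos
    · exact one_pos
  have hgap : ∀ j k, ‖lam j - lam k‖ < g → lam j = lam k := by
    intro j k hlt
    by_contra hne
    have hmem : ‖lam j - lam k‖ ∈ gaps := by
      rw [hgapsdef]
      exact Finset.mem_image.mpr ⟨(j, k), Finset.mem_filter.mpr
        ⟨Finset.mem_product.mpr ⟨Finset.mem_univ _, Finset.mem_univ _⟩, hne⟩, rfl⟩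
    have hne' : gaps.Nonempty := ⟨_, hmem⟩
    have : g ≤ ‖lam j - lam k‖ := by
      rw [hgdef, dif_pos hne']
      exact gaps.min'_le _ hmem
    linarith
  obtain ⟨δ₁, hδ₁0, hδ₁⟩ := EigAux.qual hm A lam hlam' (ε := g/3) (by positivity)
  set δ₂ : ℝ := min (min δ₁ 1) ((g/3) ^ m / K) with hδ₂def
  have hδ₂0 : 0 < δ₂ := by
    rw [hδ₂def]
    refine lt_min (lt_min hδ₁0 one_pos) ?_
    positivity
  set C : ℝ := Real.sqrt m * K ^ ((1:ℝ)/m)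
      + (2*R*Real.sqrt m + 1) / δ₂ ^ ((1:ℝ)/m) + 1 with hCdef
  have hterm1 : 0 ≤ Real.sqrt m * K ^ ((1:ℝ)/m) :=
    mul_nonneg (Real.sqrt_nonneg _) (Real.rpow_nonneg hK0.le _)
  have hterm2 : 0 ≤ (2*R*Real.sqrt m + 1) / δ₂ ^ ((1:ℝ)/m) := by
    apply div_nonneg
    · have := Real.sqrt_nonneg (m:ℝ); nlinarith
    · exact Real.rpow_nonneg hδ₂0.le _
  have hC0 : 0 < C := by rw [hCdef]; linarith
  refine ⟨C, hC0, ?_⟩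
  intro B hBA μ hμ
  have hμ' : B.charpoly.roots = Multiset.map μ Finset.univ.val := hμ
  set δ : ℝ := ‖B - A‖ with hδdef
  have hδ0 : 0 ≤ δ := norm_nonneg _
  have hδexp : 0 ≤ δ ^ ((1:ℝ)/m) := Real.rpow_nonneg hδ0 _
  have hBnorm : ‖B‖ ≤ R := by
    have : ‖B‖ ≤ ‖B - A‖ + ‖A‖ := by
      calc ‖B‖ = ‖(B - A) + A‖ := by rw [sub_add_cancel]
        _ ≤ ‖B - A‖ + ‖A‖ := norm_add_le _ _
    rw [hRdef]; linarith
  have hμbound : ∀ j, ‖μ j‖ ≤ R :=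
    fun j => le_trans (EigAux.root_norm_le (EigAux.listing_root hμ' j)) hBnorm
  have hlambound : ∀ j, ‖lam j‖ ≤ R := by
    intro j
    refine le_trans (EigAux.root_norm_le (EigAux.listing_root hlam' j)) ?_
    rw [hRdef]; linarith [norm_nonneg A]
  by_cases hcase : δ ≤ δ₂
  · -- small perturbation case
    obtain ⟨π, hπ⟩ := hδ₁ B (le_trans hcase (le_trans (min_le_left _ _) (min_le_left _ _)))
      μ hμ'
    set r : ℝ := (K * δ) ^ ((1:ℝ)/m) with hrdef
    have hr0 : 0 ≤ r := Real.rpow_nonneg (mul_nonneg hK0.le hδ0) _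
    have hrg : r ≤ g/3 := by
      have h1 : K * δ ≤ (g/3) ^ m := by
        have h2 : δ ≤ (g/3) ^ m / K := le_trans hcase (min_le_right _ _)
        calc K * δ ≤ K * ((g/3) ^ m / K) := mul_le_mul_of_nonneg_left h2 hK0.le
          _ = (g/3) ^ m := by field_simp
      calc r ≤ ((g/3) ^ m) ^ ((1:ℝ)/m) :=
            Real.rpow_le_rpow (mul_nonneg hK0.le hδ0) h1 (by positivity)
        _ = g/3 := by
            rw [← Real.rpow_natCast (g/3) m, ← Real.rpow_mul (by positivity)]
            rw [mul_one_div_cancel (ne_of_gt hm0), Real.rpow_one]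
    have hkey : ∀ j, ‖μ (π j) - lam j‖ ≤ r := by
      intro j
      have hev : ‖A.charpoly.eval (μ (π j))‖ ≤ K * δ := by
        have h0 : B.charpoly.eval (μ (π j)) = 0 := EigAux.listing_root hμ' (π j)
        have h1 := EigAux.charpoly_eval_diff_le (m := m) A B (R := R) le_rfl hBA
          (z := μ (π j)) (hμbound (π j))
        rw [h0, sub_zero] at h1
        exact h1
      obtain ⟨k, hk⟩ := EigAux.exists_root_close_of_eval_small hm hlam'
        (mul_nonneg hK0.le hδ0) hev
      have habs : ‖lam k - lam j‖ < g := by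
        have h2 : ‖lam k - lam j‖
            ≤ ‖lam k - μ (π j)‖ + ‖μ (π j) - lam j‖ := by
          have := norm_sub_le_norm_sub_add_norm_sub (lam k) (μ (π j)) (lam j)
          exact this
        have h3 : ‖lam k - μ (π j)‖ = ‖μ (π j) - lam k‖ :=
          norm_sub_rev _ _
        have h4 : ‖μ (π j) - lam k‖ ≤ g/3 := le_trans hk hrg
        have h5 : ‖μ (π j) - lam j‖ ≤ g/3 := hπ j
        rw [h3] at h2
        linarith
      have hlamkj : lam k = lam j := hgap k j habs
      rw [← hlamkj]
      exact hk
    have hsum : ∑ j, ‖μ (π j) - lam j‖ ^ 2 ≤ (m:ℝ) * r ^ 2 := by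
      calc ∑ j, ‖μ (π j) - lam j‖ ^ 2 ≤ ∑ _j : Fin m, r ^ 2 :=
            Finset.sum_le_sum (fun j _ =>
              pow_le_pow_left₀ (norm_nonneg _) (hkey j) 2)
        _ = (m:ℝ) * r ^ 2 := by
            rw [Finset.sum_const, Finset.card_univ, Fintype.card_fin, nsmul_eq_mul]
    refine ⟨π, ?_⟩
    calc Real.sqrt (∑ j, ‖μ (π j) - lam j‖ ^ 2)
        ≤ Real.sqrt ((m:ℝ) * r ^ 2) := Real.sqrt_le_sqrt hsum
      _ = Real.sqrt m * r := by
          rw [Real.sqrt_mul (le_of_lt hm0), Real.sqrt_sq hr0]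
      _ = Real.sqrt m * (K ^ ((1:ℝ)/m) * δ ^ ((1:ℝ)/m)) := by
          rw [hrdef, Real.mul_rpow hK0.le hδ0]
      _ = (Real.sqrt m * K ^ ((1:ℝ)/m)) * δ ^ ((1:ℝ)/m) := by ring
      _ ≤ C * δ ^ ((1:ℝ)/m) := by
          refine mul_le_mul_of_nonneg_right ?_ hδexp
          rw [hCdef]; linarith
  · -- large perturbation case
    push_neg at hcase
    refine ⟨Equiv.refl _, ?_⟩
    have hbound : ∀ j, ‖μ j - lam j‖ ≤ 2*R := by
      intro j
      calc ‖μ j - lam j‖ ≤ ‖μ j‖ + ‖lam j‖ := by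
            have := norm_sub_le (μ j) (lam j)
            simpa using this
        _ ≤ 2*R := by linarith [hμbound j, hlambound j]
    have hsum : ∑ j, ‖μ (Equiv.refl (Fin m) j) - lam j‖ ^ 2
        ≤ (m:ℝ) * (2*R) ^ 2 := by
      calc ∑ j, ‖μ (Equiv.refl (Fin m) j) - lam j‖ ^ 2
          ≤ ∑ _j : Fin m, (2*R) ^ 2 :=
            Finset.sum_le_sum (fun j _ =>
              pow_le_pow_left₀ (norm_nonneg _) (hbound j) 2)
        _ = (m:ℝ) * (2*R) ^ 2 := by
            rw [Finset.sum_const, Finset.card_univ, Fintype.card_fin, nsmul_eq_mul]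
    have hδ₂exp : 0 < δ₂ ^ ((1:ℝ)/m) := Real.rpow_pos_of_pos hδ₂0 _
    have hmono : δ₂ ^ ((1:ℝ)/m) ≤ δ ^ ((1:ℝ)/m) :=
      Real.rpow_le_rpow hδ₂0.le hcase.le (by positivity)
    calc Real.sqrt (∑ j, ‖μ (Equiv.refl (Fin m) j) - lam j‖ ^ 2)
        ≤ Real.sqrt ((m:ℝ) * (2*R) ^ 2) := Real.sqrt_le_sqrt hsum
      _ = Real.sqrt m * (2*R) := by
          rw [Real.sqrt_mul (le_of_lt hm0), Real.sqrt_sq (by linarith)]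
      _ ≤ 2*R*Real.sqrt m + 1 := by nlinarith [Real.sqrt_nonneg (m:ℝ)]
      _ = ((2*R*Real.sqrt m + 1) / δ₂ ^ ((1:ℝ)/m)) * δ₂ ^ ((1:ℝ)/m) := by
          rw [div_mul_cancel₀ _ (ne_of_gt hδ₂exp)]
      _ ≤ ((2*R*Real.sqrt m + 1) / δ₂ ^ ((1:ℝ)/m)) * δ ^ ((1:ℝ)/m) :=
          mul_le_mul_of_nonneg_left hmono hterm2
      _ ≤ C * δ ^ ((1:ℝ)/m) := by
          refine mul_le_mul_of_nonneg_right ?_ hδexp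
          rw [hCdef]; linarith
end
end

section
/- Let m ≥ 1, 0 ≤ m₀ ≤ m, and let ŵ_{−m},…,ŵ_m ∈ ℂ satisfy ŵ_{−k} = conj(ŵ_k) for all k and ŵ_m ≠ 0. For E ∈ ℝ define P_E(z) = ∑_{k=−m}^{m} ŵ_k·z^{k+m} − E·z^m ∈ ℂ[z]. Assume that for every E ∈ ℝ the number of roots of P_E with |z| = 1, counted with multiplicity, is at most 2m₀. Then there exists η > 0 such that for every E ∈ ℝ, P_E has at least m − m₀ roots (counted with multiplicity) of modulus ≥ 1 + η. -/
open scoped Classical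
open Polynomial

noncomputable section

/-- The polynomial `P_E(z) = ∑_{k=−m}^{m} ŵ_k z^{k+m} − E z^m`. -/
def PE (m : ℕ) (w : ℤ → ℂ) (E : ℝ) : Polynomial ℂ :=
  (∑ k ∈ Finset.Icc (-(m : ℤ)) (m : ℤ), C (w k) * X ^ (k + m).toNat) -
    C (E : ℂ) * X ^ m

lemma PE_coeff (m : ℕ) (w : ℤ → ℂ) (E : ℝ) (j : ℕ) :
    (PE m w E).coeff j =
      (if j ≤ 2*m then w ((j:ℤ) - m) else 0) - (if j = m then (E:ℂ) else 0) := by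
  unfold PE
  rw [Polynomial.coeff_sub, Polynomial.finset_sum_coeff]
  simp only [coeff_C_mul, coeff_X_pow, mul_ite, mul_one, mul_zero]
  congr 1
  by_cases hj : j ≤ 2*m
  · rw [if_pos hj, Finset.sum_eq_single ((j:ℤ) - m)]
    · rw [if_pos]; omega
    · intro k hk hne
      simp only [Finset.mem_Icc] at hk
      rw [if_neg]; omega
    · intro h
      simp only [Finset.mem_Icc] at h
      omega
  · rw [if_neg hj]
    apply Finset.sum_eq_zero
    intro k hk
    simp only [Finset.mem_Icc] at hk
    rw [if_neg]; omega

lemma PE_natDegree (m : ℕ) (w : ℤ → ℂ) (E : ℝ) (hm : 1 ≤ m) (hwm : w (m:ℤ) ≠ 0) :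
    (PE m w E).natDegree = 2*m := by
  apply le_antisymm
  · rw [Polynomial.natDegree_le_iff_coeff_eq_zero]
    intro N hN
    rw [PE_coeff, if_neg (by omega), if_neg (by omega), sub_zero]
  · apply Polynomial.le_natDegree_of_ne_zero
    rw [PE_coeff, if_pos le_rfl, if_neg (by omega), sub_zero]
    convert hwm using 2; push_cast; ring

lemma PE_leadingCoeff (m : ℕ) (w : ℤ → ℂ) (E : ℝ) (hm : 1 ≤ m) (hwm : w (m:ℤ) ≠ 0) :
    (PE m w E).leadingCoeff = w (m:ℤ) := by
  rw [Polynomial.leadingCoeff, PE_natDegree m w E hm hwm, PE_coeff,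
    if_pos le_rfl, if_neg (by omega), sub_zero]
  congr 1; push_cast; ring

lemma PE_ne_zero (m : ℕ) (w : ℤ → ℂ) (E : ℝ) (hm : 1 ≤ m) (hwm : w (m:ℤ) ≠ 0) :
    PE m w E ≠ 0 := by
  intro h
  have := PE_leadingCoeff m w E hm hwm
  rw [h] at this
  exact hwm (by simpa using this.symm)

lemma PE_roots_card (m : ℕ) (w : ℤ → ℂ) (E : ℝ) (hm : 1 ≤ m) (hwm : w (m:ℤ) ≠ 0) :
    Multiset.card (PE m w E).roots = 2*m := by
  rw [Polynomial.splits_iff_card_roots.mp (IsAlgClosed.splits _),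
    PE_natDegree m w E hm hwm]

lemma PE_root_ne_zero (m : ℕ) (w : ℤ → ℂ) (E : ℝ) (hm : 1 ≤ m)
    (hsymm : ∀ k : ℤ, w (-k) = starRingEnd ℂ (w k)) (hwm : w (m:ℤ) ≠ 0)
    {z : ℂ} (hz : z ∈ (PE m w E).roots) : z ≠ 0 := by
  rintro rfl
  have h0 : (PE m w E).coeff 0 ≠ 0 := by
    rw [PE_coeff, if_pos (by omega), if_neg (by omega), sub_zero]
    have h1 : ((0:ℕ):ℤ) - m = -(m:ℤ) := by push_cast; ring
    rw [h1, hsymm]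
    simpa using hwm
  rw [Polynomial.mem_roots', Polynomial.IsRoot, ← Polynomial.coeff_zero_eq_eval_zero] at hz
  exact h0 hz.2

lemma PE_conj_coeff (m : ℕ) (w : ℤ → ℂ) (E : ℝ)
    (hsymm : ∀ k : ℤ, w (-k) = starRingEnd ℂ (w k)) {j : ℕ} (hj : j ≤ 2*m) :
    starRingEnd ℂ ((PE m w E).coeff j) = (PE m w E).coeff (2*m - j) := by
  rw [PE_coeff, PE_coeff, if_pos hj, if_pos (show 2*m - j ≤ 2*m by omega), map_sub]
  congr 1
  · rw [← hsymm]
    congr 1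
    push_cast [Nat.cast_sub hj]
    ring
  · by_cases h : j = m
    · rw [if_pos h, if_pos (show 2*m - j = m by omega), Complex.conj_ofReal]
    · rw [if_neg h, if_neg (show ¬ (2*m - j = m) by omega), map_zero]

lemma PE_eval_inv (m : ℕ) (w : ℤ → ℂ) (E : ℝ) (hm : 1 ≤ m)
    (hsymm : ∀ k : ℤ, w (-k) = starRingEnd ℂ (w k)) (hwm : w (m:ℤ) ≠ 0)
    {z : ℂ} (hz : z ≠ 0) :
    z ^ (2*m) * starRingEnd ℂ ((PE m w E).eval ((starRingEnd ℂ z)⁻¹)) =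
      (PE m w E).eval z := by
  have hd := PE_natDegree m w E hm hwm
  rw [Polynomial.eval_eq_sum_range, Polynomial.eval_eq_sum_range, hd]
  rw [map_sum, Finset.mul_sum]
  rw [← Finset.sum_range_reflect]
  apply Finset.sum_congr rfl
  intro j hj
  rw [Finset.mem_range] at hj
  have hj' : j ≤ 2*m := by omega
  have h1 : 2*m + 1 - 1 - j = 2*m - j := by omega
  rw [h1, map_mul, ← PE_conj_coeff m w E hsymm hj', Complex.conj_conj, map_pow,
    map_inv₀, Complex.conj_conj, inv_pow]
  have h3 : z ^ (2*m) = z ^ j * z ^ (2*m - j) := by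
    rw [← pow_add]; congr 1; omega
  rw [h3]
  have h4 : z ^ (2*m - j) ≠ 0 := pow_ne_zero _ hz
  field_simp

lemma PE_roots_map_inv (m : ℕ) (w : ℤ → ℂ) (E : ℝ) (hm : 1 ≤ m)
    (hsymm : ∀ k : ℤ, w (-k) = starRingEnd ℂ (w k)) (hwm : w (m:ℤ) ≠ 0) :
    (PE m w E).roots.map (fun z => ((starRingEnd ℂ) z)⁻¹) = (PE m w E).roots := by
  have hcard := PE_roots_card m w E hm hwm
  have hlead := PE_leadingCoeff m w E hm hwm
  set p := PE m w E with hp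
  set r := p.roots with hr
  have hne : ∀ c ∈ r, c ≠ 0 := fun c hc => PE_root_ne_zero m w E hm hsymm hwm hc
  have hfac : p = C (w (m:ℤ)) * (r.map fun c => X - C c).prod := by
    conv_lhs => rw [(IsAlgClosed.splits p).eq_prod_roots]
    rw [hlead]
  set b := (starRingEnd ℂ) (w (m:ℤ)) * (r.map fun c => -((starRingEnd ℂ) c)).prod with hb
  have hb0 : b ≠ 0 := by
    apply mul_ne_zero (by simpa using hwm)
    apply Multiset.prod_ne_zero
    rw [Multiset.mem_map]
    rintro ⟨c, hc, hc0⟩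
    exact hne c hc (by simpa using hc0.symm)
  have heq : C b * ((r.map fun c => ((starRingEnd ℂ) c)⁻¹).map fun c => X - C c).prod
      = p := by
    apply Polynomial.eq_of_infinite_eval_eq
    apply Set.Infinite.mono (s := {(0:ℂ)}ᶜ)
    · intro z hz
      simp only [Set.mem_compl_iff, Set.mem_singleton_iff] at hz
      simp only [Set.mem_setOf_eq]
      have hF := PE_eval_inv m w E hm hsymm hwm hz
      rw [← hp] at hF
      have hqz : Polynomial.eval z
          (C b * ((r.map fun c => ((starRingEnd ℂ) c)⁻¹).map fun c => X - C c).prod)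
          = b * (r.map fun c => z - ((starRingEnd ℂ) c)⁻¹).prod := by
        rw [Polynomial.eval_mul, Polynomial.eval_C, Polynomial.eval_multiset_prod,
          Multiset.map_map, Multiset.map_map]
        simp [Function.comp_def]
      have hpz : Polynomial.eval ((starRingEnd ℂ) z)⁻¹ p
          = w (m:ℤ) * (r.map fun c => ((starRingEnd ℂ) z)⁻¹ - c).prod := by
        conv_lhs => rw [hfac]
        rw [Polynomial.eval_mul, Polynomial.eval_C, Polynomial.eval_multiset_prod,
          Multiset.map_map]
        simp [Function.comp_def]
      have e1 : ((r.map fun c => ((starRingEnd ℂ) z)⁻¹ - c).map (starRingEnd ℂ)).prod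
          = (r.map fun c => z⁻¹ - (starRingEnd ℂ) c).prod := by
        rw [Multiset.map_map]
        apply congrArg
        apply Multiset.map_congr rfl
        intro c _
        simp [map_sub, map_inv₀]
      have e2 : z ^ (2*m) = (r.map fun _ => z).prod := by
        rw [Multiset.map_const', Multiset.prod_replicate, hcard]
      have e3 : (r.map fun _ => z).prod * (r.map fun c => z⁻¹ - (starRingEnd ℂ) c).prod
          = (r.map fun c => -((starRingEnd ℂ) c)).prod *
            (r.map fun c => z - ((starRingEnd ℂ) c)⁻¹).prod := by
        rw [← Multiset.prod_map_mul, ← Multiset.prod_map_mul]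
        apply congrArg
        apply Multiset.map_congr rfl
        intro c hc
        have hc0 : (starRingEnd ℂ) c ≠ 0 := by simpa using hne c hc
        field_simp
        ring
      rw [hqz, ← hF, hpz, map_mul, map_multiset_prod, e1, e2, hb]
      linear_combination (-((starRingEnd ℂ) (w (m:ℤ)))) * e3
    · apply Set.Finite.infinite_compl
      exact Set.finite_singleton 0
  have hfin : p.roots = r.map (fun c => ((starRingEnd ℂ) c)⁻¹) := by
    conv_lhs => rw [← heq]
    rw [Polynomial.roots_C_mul _ hb0, Polynomial.roots_multiset_prod_X_sub_C]
  rw [← hr] at hfin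
  exact hfin.symm

lemma count_split (r : Multiset ℂ) :
    Multiset.card r =
      Multiset.card (r.filter fun z => ‖z‖ < 1) +
      Multiset.card (r.filter fun z => ‖z‖ = 1) +
      Multiset.card (r.filter fun z => 1 < ‖z‖) := by
  have h1 := congrArg Multiset.card
    (Multiset.filter_add_not (fun z => ‖z‖ < 1) r)
  rw [Multiset.card_add] at h1
  have h2 := congrArg Multiset.card
    (Multiset.filter_add_not (fun z => ‖z‖ = 1)
      (r.filter fun z => ¬ ‖z‖ < 1))
  rw [Multiset.card_add, Multiset.filter_filter, Multiset.filter_filter] at h2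
  have e1 : (r.filter fun z => ‖z‖ = 1 ∧ ¬ ‖z‖ < 1)
      = r.filter fun z => ‖z‖ = 1 := by
    apply Multiset.filter_congr; intro z _; constructor
    · exact fun h => h.1
    · intro h; exact ⟨h, by rw [h]; exact lt_irrefl 1⟩
  have e2 : (r.filter fun z => (¬ ‖z‖ = 1) ∧ ¬ ‖z‖ < 1)
      = r.filter fun z => 1 < ‖z‖ := by
    apply Multiset.filter_congr; intro z _; constructor
    · intro h; rcases lt_trichotomy (‖z‖) 1 with h'|h'|h'
      · exact absurd h' h.2
      · exact absurd h' h.1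
      · exact h'
    · intro h; exact ⟨by intro h'; rw [h'] at h; exact lt_irrefl 1 h, by intro h'; linarith⟩
  rw [e1, e2] at h2
  omega

lemma count_le_one_split (r : Multiset ℂ) :
    Multiset.card (r.filter fun z => ‖z‖ ≤ 1) =
      Multiset.card (r.filter fun z => ‖z‖ < 1) +
      Multiset.card (r.filter fun z => ‖z‖ = 1) := by
  have h2 := congrArg Multiset.card
    (Multiset.filter_add_not (fun z => ‖z‖ < 1)
      (r.filter fun z => ‖z‖ ≤ 1))
  rw [Multiset.card_add, Multiset.filter_filter, Multiset.filter_filter] at h2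
  have e1 : (r.filter fun z => ‖z‖ < 1 ∧ ‖z‖ ≤ 1)
      = r.filter fun z => ‖z‖ < 1 := by
    apply Multiset.filter_congr; intro z _
    exact ⟨fun h => h.1, fun h => ⟨h, le_of_lt h⟩⟩
  have e2 : (r.filter fun z => (¬ ‖z‖ < 1) ∧ ‖z‖ ≤ 1)
      = r.filter fun z => ‖z‖ = 1 := by
    apply Multiset.filter_congr; intro z _; constructor
    · intro h; linarith [h.1, h.2]
    · intro h; constructor <;> rw [h] <;> simp
  rw [e1, e2] at h2
  omega

lemma PE_card_lt_eq_card_gt (m : ℕ) (w : ℤ → ℂ) (E : ℝ) (hm : 1 ≤ m)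
    (hsymm : ∀ k : ℤ, w (-k) = starRingEnd ℂ (w k)) (hwm : w (m:ℤ) ≠ 0) :
    Multiset.card ((PE m w E).roots.filter fun z => ‖z‖ < 1) =
      Multiset.card ((PE m w E).roots.filter fun z => 1 < ‖z‖) := by
  conv_lhs => rw [← PE_roots_map_inv m w E hm hsymm hwm]
  rw [Multiset.filter_map, Multiset.card_map]
  apply congrArg
  apply Multiset.filter_congr
  intro z hz
  have hz0 : z ≠ 0 := PE_root_ne_zero m w E hm hsymm hwm hz
  have hpos : 0 < ‖z‖ := by
    simpa [norm_pos_iff] using hz0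
  simp only [Function.comp_apply, map_inv₀, norm_inv, Complex.norm_conj]
  exact inv_lt_one₀ hpos

lemma roots_abs_le (p : Polynomial ℂ) {z : ℂ} (hz : z ∈ p.roots) :
    ‖z‖ ≤ max 1
      ((∑ j ∈ Finset.range p.natDegree, ‖p.coeff j‖) /
        ‖p.leadingCoeff‖) := by
  rw [Polynomial.mem_roots'] at hz
  obtain ⟨hp0, hroot⟩ := hz
  by_cases h1 : ‖z‖ ≤ 1
  · exact le_max_of_le_left h1
  push_neg at h1
  apply le_max_of_le_right
  set d := p.natDegree with hd
  have hd1 : 1 ≤ d := by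
    by_contra hd0
    push_neg at hd0
    interval_cases d
    · have : p = C (p.coeff 0) := Polynomial.eq_C_of_natDegree_eq_zero hd.symm
      rw [this] at hroot hp0
      simp only [Polynomial.IsRoot, Polynomial.eval_C] at hroot
      rw [hroot] at hp0
      simp at hp0
  have heval : (0:ℂ) = ∑ j ∈ Finset.range (d+1), p.coeff j * z ^ j := by
    rw [← Polynomial.eval_eq_sum_range]
    exact hroot.symm
  rw [Finset.sum_range_succ] at heval
  have hlead : p.coeff d * z ^ d = -∑ j ∈ Finset.range d, p.coeff j * z ^ j := by
    linear_combination -heval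
  have habs : ‖p.leadingCoeff‖ * ‖z‖ ^ d ≤
      (∑ j ∈ Finset.range d, ‖p.coeff j‖) * ‖z‖ ^ (d-1) := by
    have h2 : ‖p.coeff d * z ^ d‖ =
        ‖p.leadingCoeff‖ * ‖z‖ ^ d := by
      rw [norm_mul, norm_pow, Polynomial.leadingCoeff]
    rw [← h2, hlead, norm_neg]
    calc ‖∑ j ∈ Finset.range d, p.coeff j * z ^ j‖
        ≤ ∑ j ∈ Finset.range d, ‖p.coeff j * z ^ j‖ := by
          exact norm_sum_le _ _
      _ ≤ (∑ j ∈ Finset.range d, ‖p.coeff j‖) * ‖z‖ ^ (d-1) := by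
          rw [Finset.sum_mul]
          apply Finset.sum_le_sum
          intro j hj
          rw [Finset.mem_range] at hj
          rw [norm_mul, norm_pow]
          apply mul_le_mul_of_nonneg_left _ (norm_nonneg _)
          exact pow_le_pow_right₀ (le_of_lt h1) (by omega)
  have hlp : 0 < ‖p.leadingCoeff‖ := by
    simpa [norm_pos_iff] using Polynomial.leadingCoeff_ne_zero.mpr hp0
  rw [le_div_iff₀ hlp]
  have hzpow : (0:ℝ) < ‖z‖ ^ (d-1) := by positivity
  have hzd : ‖z‖ ^ d = ‖z‖ ^ (d-1) * ‖z‖ := by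
    rw [← pow_succ]; congr 1; omega
  rw [hzd] at habs
  apply le_of_mul_le_mul_right _ hzpow
  nlinarith [habs]

lemma multiset_enum {α : Type*} {d : ℕ} (s : Multiset α) (h : Multiset.card s = d) :
    ∃ f : Fin d → α, s = Multiset.map f Finset.univ.val := by
  have h' : s.toList.length = d := by rw [Multiset.length_toList, h]
  subst h'
  refine ⟨s.toList.get, ?_⟩
  conv_lhs => rw [← Multiset.coe_toList s]
  rw [Fin.univ_def]
  show (↑s.toList : Multiset α) = Multiset.map s.toList.get ↑(List.finRange s.toList.length)
  rw [Multiset.map_coe, List.map_get_finRange]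

lemma root_limit (d N : ℕ) (a : ℂ) (ha : a ≠ 0) (P : ℕ → Polynomial ℂ) (p : Polynomial ℂ)
    (hdeg : ∀ n, (P n).natDegree = d) (hlead : ∀ n, (P n).leadingCoeff = a)
    (hconv : ∀ z : ℂ, Filter.Tendsto (fun n => (P n).eval z) Filter.atTop (nhds (p.eval z)))
    (R : ℝ) (hR : ∀ n, ∀ z ∈ (P n).roots, ‖z‖ ≤ R)
    (r : ℕ → ℝ) (hr : Filter.Tendsto r Filter.atTop (nhds 1))
    (hN : ∀ n, N ≤ Multiset.card ((P n).roots.filter fun z => ‖z‖ < r n)) :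
    N ≤ Multiset.card (p.roots.filter fun z => ‖z‖ ≤ 1) := by
  have hcard : ∀ n, Multiset.card (P n).roots = d := fun n => by
    rw [Polynomial.splits_iff_card_roots.mp (IsAlgClosed.splits _), hdeg n]
  choose x hx using fun n => multiset_enum ((P n).roots) (hcard n)
  have hfac : ∀ n, P n =
      C a * (Multiset.map (fun i => X - C (x n i)) Finset.univ.val).prod := by
    intro n
    conv_lhs => rw [(IsAlgClosed.splits (P n)).eq_prod_roots]
    rw [hlead n, hx n, Multiset.map_map]
    rfl
  have hbdd : ∀ n, x n ∈ Metric.closedBall (0 : Fin d → ℂ) (max R 0) := by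
    intro n
    rw [mem_closedBall_zero_iff, pi_norm_le_iff_of_nonneg (le_max_right R 0)]
    intro i
    refine le_trans (hR n (x n i) ?_) (le_max_left _ _)
    rw [hx n]
    exact Multiset.mem_map_of_mem _ (Finset.mem_univ_val _)
  obtain ⟨x₀, -, φ, hφ, hxconv⟩ :=
    tendsto_subseq_of_bounded Metric.isBounded_closedBall (fun n => hbdd n)
  have hcoord : ∀ i, Filter.Tendsto (fun n => x (φ n) i) Filter.atTop (nhds (x₀ i)) :=
    fun i => ((continuous_apply i).tendsto x₀).comp hxconv
  have hevalform : ∀ (y : Fin d → ℂ) (z : ℂ),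
      (C a * (Multiset.map (fun i => X - C (y i)) Finset.univ.val).prod).eval z
        = a * ∏ i : Fin d, (z - y i) := by
    intro y z
    rw [Polynomial.eval_mul, Polynomial.eval_C, Polynomial.eval_multiset_prod,
      Multiset.map_map]
    congr 1
    simp [Function.comp_def, Finset.prod]
  have hp : p = C a * (Multiset.map (fun i => X - C (x₀ i)) Finset.univ.val).prod := by
    apply Polynomial.funext
    intro z
    have h1 : Filter.Tendsto (fun n => (P (φ n)).eval z) Filter.atTop (nhds (p.eval z)) :=
      (hconv z).comp hφ.tendsto_atTop
    have h2 : Filter.Tendsto (fun n => (P (φ n)).eval z) Filter.atTop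
        (nhds (a * ∏ i : Fin d, (z - x₀ i))) := by
      have heq : (fun n => (P (φ n)).eval z) = fun n => a * ∏ i : Fin d, (z - x (φ n) i) := by
        funext n
        rw [hfac (φ n), hevalform]
      rw [heq]
      apply Filter.Tendsto.const_mul
      apply tendsto_finset_prod
      intro i _
      exact Filter.Tendsto.const_sub z (hcoord i)
    rw [tendsto_nhds_unique h1 h2, hevalform]
  have hroots : p.roots = Multiset.map x₀ Finset.univ.val := by
    have hmm : Multiset.map (fun i => X - C (x₀ i)) Finset.univ.val
        = Multiset.map (fun c => X - C c) (Multiset.map x₀ Finset.univ.val) := by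
      rw [Multiset.map_map]; rfl
    rw [hp, Polynomial.roots_C_mul _ ha, hmm, Polynomial.roots_multiset_prod_X_sub_C]
  have hTcount : Multiset.card (p.roots.filter fun z => ‖z‖ ≤ 1)
      = (Finset.univ.filter fun i => ‖x₀ i‖ ≤ 1).card := by
    rw [hroots, Multiset.filter_map, Multiset.card_map]
    rfl
  have hev : ∀ᶠ n in Filter.atTop, ∀ i : Fin d,
      ¬ (‖x₀ i‖ ≤ 1) → ¬ (‖x (φ n) i‖ < r (φ n)) := by
    rw [Filter.eventually_all]
    intro i
    by_cases hi : ‖x₀ i‖ ≤ 1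
    · filter_upwards with n hcon
      exact absurd hi hcon
    · push_neg at hi
      set t := (1 + ‖x₀ i‖)/2 with htdef
      have ht1 : 1 < t := by rw [htdef]; linarith
      have ht2 : t < ‖x₀ i‖ := by rw [htdef]; linarith
      have hA : ∀ᶠ n in Filter.atTop, t < ‖x (φ n) i‖ := by
        have : Filter.Tendsto (fun n => ‖x (φ n) i‖) Filter.atTop
            (nhds (‖x₀ i‖)) := (continuous_norm.tendsto _).comp (hcoord i)
        exact this.eventually_const_lt ht2
      have hB : ∀ᶠ n in Filter.atTop, r (φ n) < t := by
        have : Filter.Tendsto (fun n => r (φ n)) Filter.atTop (nhds 1) :=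
          hr.comp hφ.tendsto_atTop
        exact this.eventually_lt_const ht1
      filter_upwards [hA, hB] with n hA' hB'
      intro _ hcon
      linarith
  obtain ⟨n, hn⟩ := hev.exists
  have hSn : N ≤ (Finset.univ.filter fun i : Fin d =>
      ‖x (φ n) i‖ < r (φ n)).card := by
    have h := hN (φ n)
    rw [hx (φ n), Multiset.filter_map, Multiset.card_map] at h
    exact h
  have hsub : (Finset.univ.filter fun i : Fin d => ‖x (φ n) i‖ < r (φ n))
      ⊆ (Finset.univ.filter fun i => ‖x₀ i‖ ≤ 1) := by
    intro i hi
    simp only [Finset.mem_filter, Finset.mem_univ, true_and] at hi ⊢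
    by_contra hcon
    exact hn i hcon hi
  rw [hTcount]
  exact le_trans hSn (Finset.card_le_card hsub)

lemma PE_eval_split (m : ℕ) (w : ℤ → ℂ) (E : ℝ) (hm : 1 ≤ m) (hwm : w (m:ℤ) ≠ 0)
    (z : ℂ) :
    (PE m w E).eval z =
      (∑ j ∈ Finset.range (2*m+1), w ((j:ℤ) - m) * z^j) - (E:ℂ) * z^m := by
  rw [Polynomial.eval_eq_sum_range, PE_natDegree m w E hm hwm]
  have hterm : ∀ j ∈ Finset.range (2*m+1), (PE m w E).coeff j * z ^ j
      = w ((j:ℤ) - m) * z^j - (if j = m then (E:ℂ) else 0) * z^j := by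
    intro j hj
    rw [Finset.mem_range] at hj
    rw [PE_coeff, if_pos (by omega)]
    ring
  rw [Finset.sum_congr rfl hterm, Finset.sum_sub_distrib]
  congr 1
  simp only [ite_mul, zero_mul]
  rw [Finset.sum_ite_eq' (Finset.range (2*m+1)) m (fun j => (E:ℂ) * z^j)]
  rw [if_pos (by rw [Finset.mem_range]; omega)]

lemma PE_E_bound (m : ℕ) (w : ℤ → ℂ) (E : ℝ) (hm : 1 ≤ m) (hwm : w (m:ℤ) ≠ 0)
    {z : ℂ} (hz : z ∈ (PE m w E).roots) (h1 : 1 ≤ ‖z‖)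
    (h2 : ‖z‖ ≤ 2) :
    |E| ≤ (∑ j ∈ Finset.range (2*m+1), ‖w ((j:ℤ) - m)‖) * 2^(2*m) := by
  rw [Polynomial.mem_roots'] at hz
  have heval := hz.2
  rw [Polynomial.IsRoot, PE_eval_split m w E hm hwm, sub_eq_zero] at heval
  have hEabs : |E| * ‖z‖ ^ m
      = ‖∑ j ∈ Finset.range (2*m+1), w ((j:ℤ) - m) * z^j‖ := by
    rw [heval, norm_mul, norm_pow, Complex.norm_real, Real.norm_eq_abs]
  have hsum : ‖∑ j ∈ Finset.range (2*m+1), w ((j:ℤ) - m) * z^j‖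
      ≤ (∑ j ∈ Finset.range (2*m+1), ‖w ((j:ℤ) - m)‖) * 2^(2*m) := by
    calc ‖∑ j ∈ Finset.range (2*m+1), w ((j:ℤ) - m) * z^j‖
        ≤ ∑ j ∈ Finset.range (2*m+1), ‖w ((j:ℤ) - m) * z^j‖ :=
          norm_sum_le _ _
      _ ≤ ∑ j ∈ Finset.range (2*m+1), ‖w ((j:ℤ) - m)‖ * 2^(2*m) := by
          apply Finset.sum_le_sum
          intro j hj
          rw [Finset.mem_range] at hj
          rw [norm_mul, norm_pow]
          apply mul_le_mul_of_nonneg_left _ (norm_nonneg _)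
          calc ‖z‖ ^ j ≤ 2^j := pow_le_pow_left₀ (norm_nonneg _) h2 j
            _ ≤ 2^(2*m) := pow_le_pow_right₀ one_le_two (by omega)
      _ = _ := by rw [Finset.sum_mul]
  have h3 : |E| ≤ |E| * ‖z‖ ^ m := by
    nth_rewrite 1 [← mul_one (|E|)]
    apply mul_le_mul_of_nonneg_left _ (abs_nonneg E)
    exact one_le_pow₀ h1
  linarith

lemma PE_R_bound (m : ℕ) (w : ℤ → ℂ) (E : ℝ) (hm : 1 ≤ m) (hwm : w (m:ℤ) ≠ 0)
    (CC : ℝ) (hCC : 0 ≤ CC) (hE : |E| ≤ CC) {z : ℂ} (hz : z ∈ (PE m w E).roots) :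
    ‖z‖ ≤ max 1
      (((∑ j ∈ Finset.range (2*m+1), ‖w ((j:ℤ) - m)‖) + CC) /
        ‖w (m:ℤ)‖) := by
  refine le_trans (roots_abs_le (PE m w E) hz) ?_
  apply max_le_max le_rfl
  rw [PE_natDegree m w E hm hwm, PE_leadingCoeff m w E hm hwm]
  have hpos : 0 < ‖w (m:ℤ)‖ := by
    simpa [norm_pos_iff] using hwm
  apply div_le_div_of_nonneg_right ?_ hpos.le |>.trans le_rfl
  calc ∑ j ∈ Finset.range (2*m), ‖(PE m w E).coeff j‖
      ≤ ∑ j ∈ Finset.range (2*m),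
          (‖w ((j:ℤ) - m)‖ + if j = m then |E| else 0) := by
        apply Finset.sum_le_sum
        intro j hj
        rw [Finset.mem_range] at hj
        rw [PE_coeff, if_pos (by omega), sub_eq_add_neg]
        refine le_trans (norm_add_le _ _) ?_
        rw [norm_neg]
        apply add_le_add le_rfl
        rw [apply_ite norm, norm_zero, Complex.norm_real, Real.norm_eq_abs]
    _ = (∑ j ∈ Finset.range (2*m), ‖w ((j:ℤ) - m)‖) +
        ∑ j ∈ Finset.range (2*m), (if j = m then |E| else 0) :=
        Finset.sum_add_distrib
    _ ≤ (∑ j ∈ Finset.range (2*m+1), ‖w ((j:ℤ) - m)‖) + CC := by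
        apply add_le_add
        · apply Finset.sum_le_sum_of_subset_of_nonneg
          · apply Finset.range_subset_range.mpr; omega
          · intro j _ _; exact norm_nonneg _
        · rw [Finset.sum_ite_eq' (Finset.range (2*m)) m (fun _ => |E|),
            if_pos (by rw [Finset.mem_range]; omega)]
          exact hE

/-- **Uniform gap for the large roots (Ge–You–Zhao, proof of Proposition 5.3)**:
if for every `E ∈ ℝ` the polynomial `P_E` has at most `2m₀` roots on the unit circle
(with multiplicity), then there exists `η > 0` such that for every `E ∈ ℝ`, `P_E`
has at least `m − m₀` roots (with multiplicity) of modulus `≥ 1 + η`. -/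
theorem uniform_gap_of_large_roots
    (m m₀ : ℕ) (hm : 1 ≤ m) (hm₀ : m₀ ≤ m) (w : ℤ → ℂ)
    (hsymm : ∀ k : ℤ, w (-k) = starRingEnd ℂ (w k)) (hwm : w (m : ℤ) ≠ 0)
    (hcirc : ∀ E : ℝ,
      (((PE m w E).roots).filter fun z => ‖z‖ = 1).card ≤ 2 * m₀) :
    ∃ η : ℝ, 0 < η ∧ ∀ E : ℝ,
      m - m₀ ≤ (((PE m w E).roots).filter fun z => 1 + η ≤ ‖z‖).card := by
  by_contra hcon
  push_neg at hcon
  set W := ∑ j ∈ Finset.range (2*m+1), ‖w ((j:ℤ) - m)‖ with hW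
  have hWnn : 0 ≤ W := Finset.sum_nonneg fun j _ => norm_nonneg _
  set CC := W * 2^(2*m) with hCC
  have hCCnn : 0 ≤ CC := by positivity
  have hsel : ∀ n : ℕ, ∃ E : ℝ,
      Multiset.card ((PE m w E).roots.filter
        fun z => 1 + (1/((n:ℝ)+1)) ≤ ‖z‖) < m - m₀ := by
    intro n
    exact hcon _ (by positivity)
  choose Es hEs using hsel
  have hsmall : ∀ n : ℕ, m + m₀ + 1 ≤
      Multiset.card ((PE m w (Es n)).roots.filter
        fun z => ‖z‖ < 1 + (1/((n:ℝ)+1))) := by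
    intro n
    have htot := PE_roots_card m w (Es n) hm hwm
    have hsplit := congrArg Multiset.card
      (Multiset.filter_add_not (fun z => 1 + (1/((n:ℝ)+1)) ≤ ‖z‖)
        ((PE m w (Es n)).roots))
    rw [Multiset.card_add, htot] at hsplit
    have hcongr : ((PE m w (Es n)).roots.filter
          fun z => ¬ (1 + (1/((n:ℝ)+1)) ≤ ‖z‖))
        = (PE m w (Es n)).roots.filter
          fun z => ‖z‖ < 1 + (1/((n:ℝ)+1)) := by
      apply Multiset.filter_congr; intro z _; exact not_le
    rw [hcongr] at hsplit
    have h := hEs n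
    omega
  have hlt1 : ∀ E : ℝ,
      Multiset.card ((PE m w E).roots.filter fun z => ‖z‖ < 1) ≤ m := by
    intro E
    have h1 := PE_card_lt_eq_card_gt m w E hm hsymm hwm
    have h2 := count_split (PE m w E).roots
    rw [PE_roots_card m w E hm hwm] at h2
    omega
  have hEbdd : ∀ n, |Es n| ≤ CC := by
    intro n
    have hrn1 : (1:ℝ) < 1 + (1/((n:ℝ)+1)) := by
      have : (0:ℝ) < 1/((n:ℝ)+1) := by positivity
      linarith
    have hrn2 : (1:ℝ) + (1/((n:ℝ)+1)) ≤ 2 := by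
      have h0 : (0:ℝ) ≤ (n:ℝ) := Nat.cast_nonneg n
      have : (1:ℝ)/((n:ℝ)+1) ≤ 1 := by
        rw [div_le_one (by positivity)]; linarith
      linarith
    have hsplit := congrArg Multiset.card
      (Multiset.filter_add_not (fun z => ‖z‖ < 1)
        ((PE m w (Es n)).roots.filter fun z => ‖z‖ < 1 + (1/((n:ℝ)+1))))
    rw [Multiset.card_add, Multiset.filter_filter, Multiset.filter_filter] at hsplit
    have hcardle : Multiset.card ((PE m w (Es n)).roots.filter
        fun z => ‖z‖ < 1 ∧ ‖z‖ < 1 + (1/((n:ℝ)+1))) ≤ m := by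
      refine le_trans (Multiset.card_le_card
        (Multiset.monotone_filter_right _ ?_)) (hlt1 (Es n))
      intro z hz
      exact hz.1
    have hpos : 0 < Multiset.card ((PE m w (Es n)).roots.filter
        fun z => (¬ ‖z‖ < 1) ∧ ‖z‖ < 1 + (1/((n:ℝ)+1))) := by
      have h := hsmall n
      omega
    obtain ⟨z, hzmem⟩ := Multiset.card_pos_iff_exists_mem.mp hpos
    rw [Multiset.mem_filter] at hzmem
    rw [hCC, hW]
    exact PE_E_bound m w (Es n) hm hwm hzmem.1 (not_lt.mp hzmem.2.1)
      (le_trans hzmem.2.2.le hrn2)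
  have hmem : ∀ n, Es n ∈ Set.Icc (-CC) CC := by
    intro n
    rw [Set.mem_Icc, ← abs_le]
    exact hEbdd n
  obtain ⟨E₀, -, φ, hφ, hEconv⟩ :=
    tendsto_subseq_of_bounded (Metric.isBounded_Icc (-CC) CC) hmem
  have hkey : m + m₀ + 1 ≤
      Multiset.card ((PE m w E₀).roots.filter fun z => ‖z‖ ≤ 1) := by
    apply root_limit (2*m) (m+m₀+1) (w (m:ℤ)) hwm
      (fun n => PE m w (Es (φ n))) (PE m w E₀)
      (fun n => PE_natDegree m w _ hm hwm) (fun n => PE_leadingCoeff m w _ hm hwm)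
      ?_ (max 1 ((W + CC) / ‖w (m:ℤ)‖)) ?_
      (fun n => 1 + (1/((φ n : ℝ)+1))) ?_ (fun n => hsmall (φ n))
    · intro z
      have h1 : ∀ E : ℝ, (PE m w E).eval z =
          (∑ j ∈ Finset.range (2*m+1), w ((j:ℤ) - m) * z^j) - (E:ℂ) * z^m :=
        fun E => PE_eval_split m w E hm hwm z
      simp only [h1]
      apply Filter.Tendsto.sub tendsto_const_nhds
      apply Filter.Tendsto.mul_const
      exact (Complex.continuous_ofReal.tendsto E₀).comp hEconv
    · intro n z hz
      exact PE_R_bound m w _ hm hwm CC hCCnn (hEbdd _) hz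
    · have h0 : Filter.Tendsto (fun n => ((φ n : ℝ)+1)) Filter.atTop Filter.atTop := by
        apply Filter.tendsto_atTop_add_const_right
        exact tendsto_natCast_atTop_atTop.comp hφ.tendsto_atTop
      have h1 : Filter.Tendsto (fun n => 1/((φ n:ℝ)+1)) Filter.atTop (nhds 0) := by
        simpa [one_div, Pi.inv_def] using h0.inv_tendsto_atTop
      simpa using (tendsto_const_nhds (x := (1:ℝ))).add h1
  have hA := count_le_one_split (PE m w E₀).roots
  have hB := count_split (PE m w E₀).roots
  have hC := PE_card_lt_eq_card_gt m w E₀ hm hsymm hwm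
  have hD := hcirc E₀
  have hT := PE_roots_card m w E₀ hm hwm
  omega
end
end

section
/- Let d ≥ 1, r ≥ 1 and N ≥ 1 be integers. Let R be a symmetric relation on {1,…,r} with (k,k) ∉ R for all k, and for each (k,ℓ) ∈ R let n_{k,ℓ} ∈ ℤ^d satisfy n_{ℓ,k} = −n_{k,ℓ} and |n_{k,ℓ}| ≤ N. Assume the following consistency property: whenever (ℓ,j) ∈ R and (ℓ′,j) ∈ R with ℓ ≠ ℓ′, then (ℓ,ℓ′) ∈ R and n_{ℓ,j} − n_{ℓ′,j} = n_{ℓ,ℓ′}. Then there exist m₁,…,m_r ∈ ℤ^d with max_{1≤ℓ≤r} |m_ℓ| ≤ r·N such that m_k − m_ℓ = −n_{k,ℓ} for every (k,ℓ) ∈ R. -/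
noncomputable section

/-- **Existence of the resonance-compensating vectors (Lemma 3.5 of Ge–You–Zhao)**:
given a symmetric irreflexive relation `R` on `{1,…,r}` and resonant sites
`n k ℓ ∈ ℤ^d` with `n ℓ k = −n k ℓ`, `|n k ℓ| ≤ N` satisfying the consistency
property, there exist `m₁,…,m_r ∈ ℤ^d` with `|m_ℓ| ≤ r·N` and
`m_k − m_ℓ = −n k ℓ` for every `(k,ℓ) ∈ R`.  Here `|·|` is the sup norm on `ℤ^d`. -/
theorem resonance_compensating_vectors
    (d r N : ℕ) (hd : 1 ≤ d) (hr : 1 ≤ r) (hN : 1 ≤ N)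
    (R : Fin r → Fin r → Prop)
    (hsymm : ∀ k ℓ, R k ℓ → R ℓ k)
    (hirr : ∀ k, ¬ R k k)
    (n : Fin r → Fin r → (Fin d → ℤ))
    (hanti : ∀ k ℓ, R k ℓ → n ℓ k = -n k ℓ)
    (hbound : ∀ k ℓ, R k ℓ → ‖n k ℓ‖ ≤ (N : ℝ))
    (hconsistent : ∀ ℓ ℓ' j : Fin r, R ℓ j → R ℓ' j → ℓ ≠ ℓ' →
      R ℓ ℓ' ∧ n ℓ j - n ℓ' j = n ℓ ℓ') :
    ∃ mv : Fin r → (Fin d → ℤ),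
      (∀ ℓ, ‖mv ℓ‖ ≤ (r : ℝ) * N) ∧
      ∀ k ℓ, R k ℓ → mv k - mv ℓ = -n k ℓ := by
  classical
  -- `S` is the equivalence relation "equal or related by `R`".
  set S : Fin r → Fin r → Prop := fun a b => a = b ∨ R a b with hS
  have hSrefl : ∀ a, S a a := fun a => Or.inl rfl
  have hSsymm : ∀ a b, S a b → S b a := by
    rintro a b (rfl | h)
    · exact Or.inl rfl
    · exact Or.inr (hsymm _ _ h)
  have hStrans : ∀ a b c, S a b → S b c → S a c := by
    rintro a b c (rfl | hab) (rfl | hbc)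
    · exact Or.inl rfl
    · exact Or.inr hbc
    · exact Or.inr hab
    · by_cases hac : a = c
      · exact Or.inl hac
      · exact Or.inr (hconsistent a c b hab (hsymm b c hbc) hac).1
  let s : Setoid (Fin r) :=
    ⟨S, fun a => hSrefl a, fun h => hSsymm _ _ h, fun h h' => hStrans _ _ _ h h'⟩
  let rep : Fin r → Fin r := fun ℓ => (Quotient.mk s ℓ).out
  have hrepS : ∀ ℓ, S ℓ (rep ℓ) := fun ℓ =>
    hSsymm _ _ (Quotient.mk_out (s := s) ℓ)
  have hrep_eq : ∀ k ℓ, S k ℓ → rep k = rep ℓ := by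
    intro k ℓ h
    have : Quotient.mk s k = Quotient.mk s ℓ := Quotient.sound h
    simp only [rep, this]
  -- the compensating vectors
  refine ⟨fun ℓ => if ℓ = rep ℓ then 0 else -n ℓ (rep ℓ), ?_, ?_⟩
  · intro ℓ
    have hrN : (N : ℝ) ≤ (r : ℝ) * N := by
      have h1 : (1 : ℝ) ≤ (r : ℝ) := by exact_mod_cast hr
      nlinarith [Nat.cast_nonneg (α := ℝ) N]
    by_cases h : ℓ = rep ℓ
    · simp only [if_pos h, norm_zero]
      positivity
    · have hR : R ℓ (rep ℓ) := (hrepS ℓ).resolve_left h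
      simp only [if_neg h, norm_neg]
      exact (hbound _ _ hR).trans hrN
  · intro k ℓ hkl
    have hkℓ : k ≠ ℓ := by rintro rfl; exact hirr k hkl
    have hc : rep k = rep ℓ := hrep_eq _ _ (Or.inr hkl)
    by_cases hk : k = rep k <;> by_cases hl : ℓ = rep ℓ
    · exact absurd (hk.trans (hc.trans hl.symm)) hkℓ
    · have hrℓ : rep ℓ = k := by rw [← hc, ← hk]
      simp only [if_pos hk, if_neg hl]
      rw [hrℓ, hanti k ℓ hkl]
      simp
    · have hrk : rep k = ℓ := hc.trans hl.symm
      simp only [if_neg hk, if_pos hl]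
      rw [hrk, sub_zero]
    · have hRk : R k (rep k) := (hrepS k).resolve_left hk
      have hRl : R ℓ (rep ℓ) := (hrepS ℓ).resolve_left hl
      rw [hc] at hRk
      have hkey := (hconsistent k ℓ (rep ℓ) hRk hRl hkℓ).2
      have hk' : ¬ k = rep ℓ := fun h => hk (h.trans hc.symm)
      simp only [if_neg hk, if_neg hl]
      rw [hc, ← hkey]
      abel
end
end

section
/- Let m ≥ 1 and let L, F be m×m complex matrices with ‖L‖ ≤ 1/8 and ‖F‖ ≤ 1/8, where ‖·‖ is the operator norm. Then there exists an m×m complex matrix G with exp(L + F) = exp(L)·exp(G) and ‖G‖ ≤ 2·‖F‖. -/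
open scoped Matrix.Norms.L2Operator

-- numeric bound
lemma aux_exp_eighth_le : Real.exp (1/8 : ℝ) ≤ 1.134 := by
  have h := Real.exp_bound (x := (1/8 : ℝ)) (by rw [abs_of_nonneg] <;> norm_num) (n := 3) (by norm_num)
  have h2 := (abs_le.1 h).2
  have hs : (∑ m ∈ Finset.range 3, (1/8 : ℝ) ^ m / m.factorial) = 1 + 1/8 + 1/128 := by
    simp [Finset.sum_range_succ, Nat.factorial]
    norm_num
  rw [hs] at h2
  have : |(1/8 : ℝ)| ^ 3 * (↑(Nat.succ 3) / (↑(Nat.factorial 3) * ↑(3:ℕ))) ≤ 4/9216 := by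
    rw [abs_of_nonneg (by norm_num)]
    norm_num [Nat.factorial]
  norm_num at h2 this ⊢
  linarith

section MainAux
variable {𝔸 : Type*} [NormedRing 𝔸] [NormedAlgebra ℂ 𝔸] [CompleteSpace 𝔸] [NormOneClass 𝔸]

lemma aux_norm_pow_sub_pow_le (x y : 𝔸) {a b : ℝ} (ha : ‖x‖ ≤ a) (hb : ‖y‖ ≤ b)
    (ha0 : 0 ≤ a) (hb0 : 0 ≤ b) (n : ℕ) :
    ‖x ^ n - y ^ n‖ ≤ (∑ i ∈ Finset.range n, a ^ i * b ^ (n - 1 - i)) * ‖x - y‖ := by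
  induction n with
  | zero => simp
  | succ n ih =>
    have key : x ^ (n + 1) - y ^ (n + 1) = x * (x ^ n - y ^ n) + (x - y) * y ^ n := by
      rw [mul_sub, sub_mul, pow_succ' x, pow_succ' y]; abel
    have hsum : (∑ i ∈ Finset.range (n + 1), a ^ i * b ^ (n + 1 - 1 - i))
        = a * (∑ i ∈ Finset.range n, a ^ i * b ^ (n - 1 - i)) + b ^ n := by
      rw [Finset.sum_range_succ', Finset.mul_sum]
      congr 1
      · refine Finset.sum_congr rfl fun i hi => ?_
        have he : n + 1 - 1 - (i + 1) = n - 1 - i := by omega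
        rw [he, pow_succ' a, mul_assoc]
      · simp
    have h1 : ‖x ^ (n + 1) - y ^ (n + 1)‖ ≤ ‖x‖ * ‖x ^ n - y ^ n‖ + ‖x - y‖ * ‖y ^ n‖ := by
      rw [key]
      exact (norm_add_le _ _).trans (add_le_add (norm_mul_le _ _) (norm_mul_le _ _))
    have h2 : ‖y ^ n‖ ≤ b ^ n := (norm_pow_le y n).trans (pow_le_pow_left₀ (norm_nonneg _) hb n)
    have hS0 : 0 ≤ ∑ i ∈ Finset.range n, a ^ i * b ^ (n - 1 - i) :=
      Finset.sum_nonneg fun i _ => mul_nonneg (pow_nonneg ha0 _) (pow_nonneg hb0 _)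
    calc ‖x ^ (n + 1) - y ^ (n + 1)‖
        ≤ ‖x‖ * ‖x ^ n - y ^ n‖ + ‖x - y‖ * ‖y ^ n‖ := h1
      _ ≤ a * ((∑ i ∈ Finset.range n, a ^ i * b ^ (n - 1 - i)) * ‖x - y‖) + ‖x - y‖ * b ^ n := by
          gcongr
      _ = (a * (∑ i ∈ Finset.range n, a ^ i * b ^ (n - 1 - i)) + b ^ n) * ‖x - y‖ := by ring
      _ = _ := by rw [hsum]

lemma aux_exp_sub_eq (x y : 𝔸) :
    NormedSpace.exp x - NormedSpace.exp y
      = ∑' n : ℕ, ((n.factorial : ℂ))⁻¹ • (x ^ n - y ^ n) := by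
  simp only [NormedSpace.exp_eq_tsum ℂ]
  rw [← Summable.tsum_sub (NormedSpace.expSeries_summable' (𝕂 := ℂ) x)
    (NormedSpace.expSeries_summable' (𝕂 := ℂ) y)]
  exact tsum_congr fun n => (smul_sub _ _ _).symm

lemma aux_norm_smul_fact (n : ℕ) (z : 𝔸) :
    ‖((n.factorial : ℂ))⁻¹ • z‖ = ((n.factorial : ℝ))⁻¹ * ‖z‖ := by
  rw [norm_smul, norm_inv, Complex.norm_natCast]

lemma aux_hasSum_exp (a : ℝ) :
    HasSum (fun n : ℕ => a ^ n / n.factorial) (Real.exp a) := by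
  simp only [Real.exp_eq_exp_ℝ, NormedSpace.exp_eq_tsum_div]
  exact (NormedSpace.expSeries_div_summable a).hasSum

lemma aux_norm_exp_le (x : 𝔸) : ‖NormedSpace.exp x‖ ≤ Real.exp ‖x‖ := by
  have h : NormedSpace.exp x = ∑' n : ℕ, ((n.factorial : ℂ))⁻¹ • x ^ n := by
    simp only [NormedSpace.exp_eq_tsum ℂ]
  rw [h]
  refine tsum_of_norm_bounded (aux_hasSum_exp ‖x‖) fun n => ?_
  rw [aux_norm_smul_fact]
  rw [div_eq_inv_mul]
  gcongr
  exact norm_pow_le x n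

lemma aux_norm_exp_sub_exp_le (x y : 𝔸) {a b : ℝ} (ha : ‖x‖ ≤ a) (hb : ‖y‖ ≤ b)
    (hb0 : 0 ≤ b) (hba : b < a) :
    ‖NormedSpace.exp x - NormedSpace.exp y‖
      ≤ (Real.exp a - Real.exp b) / (a - b) * ‖x - y‖ := by
  have ha0 : 0 ≤ a := hb0.trans hba.le
  rw [aux_exp_sub_eq]
  have hsum : HasSum (fun n : ℕ => (a ^ n / n.factorial - b ^ n / n.factorial) / (a - b) * ‖x - y‖)
      ((Real.exp a - Real.exp b) / (a - b) * ‖x - y‖) :=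
    (((aux_hasSum_exp a).sub (aux_hasSum_exp b)).div_const (a - b)).mul_right ‖x - y‖
  refine tsum_of_norm_bounded hsum fun n => ?_
  rw [aux_norm_smul_fact]
  have hgeom : (∑ i ∈ Finset.range n, a ^ i * b ^ (n - 1 - i)) = (a ^ n - b ^ n) / (a - b) := by
    rw [eq_div_iff (by linarith : a - b ≠ 0), geom_sum₂_mul]
  have h2 := aux_norm_pow_sub_pow_le x y ha hb ha0 hb0 n
  rw [hgeom] at h2
  calc ((n.factorial : ℝ))⁻¹ * ‖x ^ n - y ^ n‖
      ≤ ((n.factorial : ℝ))⁻¹ * ((a ^ n - b ^ n) / (a - b) * ‖x - y‖) := by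
        gcongr
      _ = (a ^ n / n.factorial - b ^ n / n.factorial) / (a - b) * ‖x - y‖ := by ring

lemma aux_norm_exp_sub_exp_sub_le (x y : 𝔸) {r : ℝ} (hx : ‖x‖ ≤ r) (hy : ‖y‖ ≤ r) (hr : 0 ≤ r) :
    ‖NormedSpace.exp x - NormedSpace.exp y - (x - y)‖ ≤ (Real.exp r - 1) * ‖x - y‖ := by
  have hsf : Summable (fun n : ℕ => ((n.factorial : ℂ))⁻¹ • (x ^ n - y ^ n)) := by
    simpa [smul_sub] using (NormedSpace.expSeries_summable' (𝕂 := ℂ) x).sub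
      (NormedSpace.expSeries_summable' (𝕂 := ℂ) y)
  have key : NormedSpace.exp x - NormedSpace.exp y - (x - y)
      = ∑' n : ℕ, (((n + 1 + 1).factorial : ℂ))⁻¹ • (x ^ (n + 1 + 1) - y ^ (n + 1 + 1)) := by
    rw [aux_exp_sub_eq, Summable.tsum_eq_zero_add hsf,
      Summable.tsum_eq_zero_add ((summable_nat_add_iff 1).2 hsf)]
    simp only [pow_zero, sub_self, smul_zero, zero_add, pow_one, Nat.factorial_one,
      Nat.cast_one, inv_one, one_smul]
    abel
  rw [key]
  have hB : HasSum (fun n : ℕ => r ^ (n + 1) / (n + 1).factorial) (Real.exp r - 1) := by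
    refine (hasSum_nat_add_iff (f := fun n : ℕ => r ^ n / (n.factorial : ℝ)) 1).2 ?_
    simpa using aux_hasSum_exp r
  have hB' : HasSum (fun n : ℕ => r ^ (n + 1) / (n + 1).factorial * ‖x - y‖)
      ((Real.exp r - 1) * ‖x - y‖) := hB.mul_right _
  refine tsum_of_norm_bounded hB' fun n => ?_
  rw [aux_norm_smul_fact]
  have h2 := aux_norm_pow_sub_pow_le x y hx hy hr hr (n + 1 + 1)
  have hS : (∑ i ∈ Finset.range (n + 1 + 1), r ^ i * r ^ (n + 1 + 1 - 1 - i))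
      = (n + 1 + 1) * r ^ (n + 1) := by
    have hc : ∀ i ∈ Finset.range (n + 1 + 1), r ^ i * r ^ (n + 1 + 1 - 1 - i) = r ^ (n + 1) := by
      intro i hi
      rw [← pow_add]
      congr 1
      have := Finset.mem_range.1 hi
      omega
    rw [Finset.sum_congr rfl hc, Finset.sum_const, Finset.card_range, nsmul_eq_mul]
    push_cast
    ring
  rw [hS] at h2
  have hfact : (((n + 1 + 1).factorial : ℝ)) = (n + 1 + 1) * ((n + 1).factorial : ℝ) := by
    rw [Nat.factorial_succ]
    push_cast
    ring
  have hfpos : (0 : ℝ) < ((n + 1).factorial : ℝ) := by positivity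
  calc (((n + 1 + 1).factorial : ℝ))⁻¹ * ‖x ^ (n + 1 + 1) - y ^ (n + 1 + 1)‖
      ≤ (((n + 1 + 1).factorial : ℝ))⁻¹ * ((n + 1 + 1) * r ^ (n + 1) * ‖x - y‖) := by gcongr
    _ = r ^ (n + 1) / (n + 1).factorial * ‖x - y‖ := by
        rw [hfact]
        field_simp

end MainAux


noncomputable section

/-- **Splitting off a small perturbation of the exponential (the computation
`e^{L+F} = e^L e^{f₊}` with `|f₊| ≤ 2|F|` in the KAM step of Ge–You–Zhao)**:
if `‖L‖ ≤ 1/8` and `‖F‖ ≤ 1/8` in the operator norm, then there is a matrix `G` with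
`exp(L + F) = exp(L)·exp(G)` and `‖G‖ ≤ 2‖F‖`. -/
theorem exp_perturbation_split
    (m : ℕ) (hm : 1 ≤ m) (L F : Matrix (Fin m) (Fin m) ℂ)
    (hL : ‖L‖ ≤ 1 / 8) (hF : ‖F‖ ≤ 1 / 8) :
    ∃ G : Matrix (Fin m) (Fin m) ℂ,
      NormedSpace.exp (L + F) = NormedSpace.exp L * NormedSpace.exp G ∧
      ‖G‖ ≤ 2 * ‖F‖ := by

  haveI : Nonempty (Fin m) := ⟨⟨0, hm⟩⟩
  by_cases hF0 : F = 0
  · refine ⟨0, ?_, by simp⟩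
    simp [hF0, NormedSpace.exp_zero]
  have hFpos : 0 < ‖F‖ := norm_pos_iff.2 hF0
  have hcomm : Commute (-L) L := (Commute.refl L).neg_left
  have hinv1 : NormedSpace.exp (-L) * NormedSpace.exp L = 1 := by
    rw [← Matrix.exp_add_of_commute _ _ hcomm, neg_add_cancel, NormedSpace.exp_zero]
  have hinv2 : NormedSpace.exp L * NormedSpace.exp (-L) = 1 := by
    rw [← Matrix.exp_add_of_commute _ _ hcomm.symm, add_neg_cancel, NormedSpace.exp_zero]
  set r : ℝ := 2 * ‖F‖ with hr
  have hr0 : 0 ≤ r := by positivity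
  have hr14 : r ≤ 1/4 := by rw [hr]; linarith
  have hc00 : (0:ℝ) ≤ Real.exp r - 1 := by
    have := Real.one_le_exp hr0
    linarith
  set c : NNReal := ⟨Real.exp r - 1, hc00⟩ with hc
  have hcval : (c : ℝ) = Real.exp r - 1 := rfl
  -- approximation property
  have happrox : ApproximatesLinearOn (NormedSpace.exp)
      (ContinuousLinearMap.id ℂ (Matrix (Fin m) (Fin m) ℂ)) (Metric.closedBall 0 r) c := by
    intro p hp q hq
    rw [ContinuousLinearMap.id_apply, hcval]
    exact aux_norm_exp_sub_exp_sub_le p q (mem_closedBall_zero_iff.1 hp)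
      (mem_closedBall_zero_iff.1 hq) hr0
  -- explicit nonlinear right inverse of the identity
  let rinv : (ContinuousLinearMap.id ℂ (Matrix (Fin m) (Fin m) ℂ)).NonlinearRightInverse :=
    { toFun := id, nnnorm := 1, bound' := fun y => by simp, right_inv' := fun y => rfl }
  have hsurj := happrox.surjOn_closedBall_of_nonlinearRightInverse rinv hr0 (subset_refl _)
  -- the target point
  set y : Matrix (Fin m) (Fin m) ℂ :=
    NormedSpace.exp (-L) * NormedSpace.exp (L + F) with hy
  -- numeric facts about exp (1/8)
  set u : ℝ := Real.exp (1/8 : ℝ) with hu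
  have hu1 : 1 ≤ u := Real.one_le_exp (by norm_num)
  have hu2 : u ≤ 1.134 := aux_exp_eighth_le
  have hsq : Real.exp (1/4 : ℝ) = u ^ 2 := by
    rw [hu, sq, ← Real.exp_add]; norm_num
  have her : Real.exp r ≤ u ^ 2 := by
    rw [← hsq]; exact Real.exp_le_exp.2 (by linarith)
  -- bound on ‖y - 1‖
  have hyb : ‖y - (1 : Matrix (Fin m) (Fin m) ℂ)‖ ≤ u * (8 * (u ^ 2 - u) * ‖F‖) := by
    have h1 : y - 1 = NormedSpace.exp (-L) *
        (NormedSpace.exp (L + F) - NormedSpace.exp L) := by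
      rw [mul_sub, hinv1, hy]
    rw [h1]
    refine (norm_mul_le _ _).trans ?_
    have hL' : ‖NormedSpace.exp (-L)‖ ≤ u := by
      refine (aux_norm_exp_le _).trans ?_
      rw [hu]
      exact Real.exp_le_exp.2 (by simpa using hL)
    have hdiff : ‖NormedSpace.exp (L + F) - NormedSpace.exp L‖
        ≤ 8 * (u ^ 2 - u) * ‖F‖ := by
      have h := aux_norm_exp_sub_exp_le (L + F) L (a := 1/4) (b := 1/8)
        (by calc ‖L + F‖ ≤ ‖L‖ + ‖F‖ := norm_add_le _ _
              _ ≤ 1/4 := by linarith) hL (by norm_num) (by norm_num)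
      have heq : (Real.exp (1/4) - Real.exp (1/8)) / ((1:ℝ)/4 - 1/8)
          = 8 * (u ^ 2 - u) := by
        rw [hsq, ← hu]
        norm_num
        ring
      rw [heq] at h
      simpa using h
    have hd0 : 0 ≤ 8 * (u ^ 2 - u) * ‖F‖ := by
      have : 0 ≤ u ^ 2 - u := by nlinarith
      positivity
    exact mul_le_mul hL' hdiff (norm_nonneg _) (by linarith)
  -- numeric key inequality
  have hkey : 8 * u * (u ^ 2 - u) ≤ (2 - Real.exp r) * 2 := by
    have hs : (0:ℝ) ≤ 1.134 - u := by linarith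
    have hu0 : (0:ℝ) ≤ u := by linarith
    nlinarith [her, mul_nonneg hs hu0, mul_nonneg hs (sq_nonneg u), mul_nonneg hs hs]
  -- y lies in the target ball
  have hnn : ((rinv.nnnorm : ℝ)) = 1 := rfl
  have hymem : y ∈ Metric.closedBall (NormedSpace.exp (0 : Matrix (Fin m) (Fin m) ℂ))
      ((((rinv.nnnorm : ℝ))⁻¹ - (c : ℝ)) * r) := by
    rw [Metric.mem_closedBall, NormedSpace.exp_zero, dist_eq_norm, hnn, hcval]
    have hmul := mul_le_mul_of_nonneg_right hkey (norm_nonneg F)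
    calc ‖y - 1‖ ≤ u * (8 * (u ^ 2 - u) * ‖F‖) := hyb
      _ ≤ (2 - Real.exp r) * 2 * ‖F‖ := by nlinarith [hmul]
      _ = ((1:ℝ)⁻¹ - (Real.exp r - 1)) * r := by rw [hr]; ring
  obtain ⟨G, hGmem, hGeq⟩ := hsurj hymem
  refine ⟨G, ?_, ?_⟩
  · rw [hGeq, hy, ← mul_assoc, hinv2, one_mul]
  · have := mem_closedBall_zero_iff.1 hGmem
    rw [hr] at this
    exact this
end
end
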